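/- arXiv:0911.3919 — 2 statements merged into one kernel-verified Lean document; each statement's English description precedes it below -/
import Mathlib

section
/- Let x₀ ∈ C° and x ∈ C. Then for every w ∈ W one has ‖x₀ − w x‖ ≥ ‖x₀ − x‖ (equivalently, ⟪x₀, w x⟫ ≤ ⟪x₀, x⟫), and the inequality is strict for every w ∈ W with w x ≠ x. -/
open scoped RealInnerProductSpace

noncomputable section

/-- `g` is the orthogonal reflection in the linear hyperplane orthogonal to some
nonzero vector `u`. -/
def IsLinRefl {V : Type*} [NormedAddCommGroup V] [InnerProductSpace ℝ V]
    (g : V ≃ₗᵢ[ℝ] V) : Prop :=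
  ∃ u : V, u ≠ 0 ∧ ∀ x : V, g x = x - ((2 * ⟪x, u⟫) / ⟪u, u⟫) • u

/-- The union of the reflection hyperplanes (mirrors) of the reflections belonging to `W`;
the mirror of a reflection is exactly its set of fixed points. -/
def mirrors {V : Type*} [NormedAddCommGroup V] [InnerProductSpace ℝ V]
    (W : Subgroup (V ≃ₗᵢ[ℝ] V)) : Set V :=
  ⋃ g ∈ {g : V ≃ₗᵢ[ℝ] V | g ∈ W ∧ IsLinRefl g}, {x : V | g x = x}

/-- `C` is a fundamental chamber for `W`: the closure of a connected component of the
complement of the union of the reflection hyperplanes of `W`. -/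
def IsChamber {V : Type*} [NormedAddCommGroup V] [InnerProductSpace ℝ V]
    (W : Subgroup (V ≃ₗᵢ[ℝ] V)) (C : Set V) : Prop :=
  ∃ x₀ ∈ (mirrors W)ᶜ, C = closure (connectedComponentIn (mirrors W)ᶜ x₀)

namespace DLOD

variable {V : Type*} [NormedAddCommGroup V] [InnerProductSpace ℝ V]

/-- `u` is a (nonzero) normal vector of the reflection `g`. -/
def IsNormal (g : V ≃ₗᵢ[ℝ] V) (u : V) : Prop :=
  u ≠ 0 ∧ ∀ x : V, g x = x - ((2 * ⟪x, u⟫) / ⟪u, u⟫) • u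

lemma IsNormal.inner_self_pos {g : V ≃ₗᵢ[ℝ] V} {u : V} (h : IsNormal g u) :
    (0:ℝ) < ⟪u, u⟫ := by
  rw [real_inner_self_eq_norm_sq]
  exact pow_pos (norm_pos_iff.mpr h.1) 2

lemma IsNormal.fixed_iff {g : V ≃ₗᵢ[ℝ] V} {u : V} (h : IsNormal g u) (y : V) :
    g y = y ↔ ⟪y, u⟫ = 0 := by
  have huu : ⟪u, u⟫ ≠ 0 := ne_of_gt h.inner_self_pos
  rw [h.2 y, sub_eq_self, smul_eq_zero]
  constructor
  · rintro (hc | hc)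
    · rcases div_eq_zero_iff.mp hc with h2 | h2
      · linarith [h2]
      · exact absurd h2 huu
    · exact absurd hc h.1
  · intro hy
    left
    rw [hy]
    simp

/-- two normals of the same reflection are proportional. -/
lemma IsNormal.prop {g : V ≃ₗᵢ[ℝ] V} {u u' : V} (h : IsNormal g u) (h' : IsNormal g u') :
    ∃ c : ℝ, c ≠ 0 ∧ u' = c • u := by
  have huu : ⟪u, u⟫ ≠ 0 := ne_of_gt h.inner_self_pos
  set a := ⟪u', u⟫ / ⟪u, u⟫ with ha
  set z := u' - a • u with hz
  have hzu : ⟪z, u⟫ = 0 := by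
    rw [hz, inner_sub_left, real_inner_smul_left, ha]
    field_simp
    ring
  have hfix : g z = z := (h.fixed_iff z).mpr hzu
  have hzu' : ⟪z, u'⟫ = 0 := (h'.fixed_iff z).mp hfix
  have hzz : ⟪z, z⟫ = 0 := by
    rw [hz]
    rw [inner_sub_right, real_inner_smul_right]
    rw [show ⟪u' - a • u, u'⟫ = ⟪z, u'⟫ from rfl, show ⟪u' - a • u, u⟫ = ⟪z, u⟫ from rfl,
      hzu, hzu']
    ring
  have hz0 : z = 0 := inner_self_eq_zero.mp hzz
  have hu' : u' = a • u := by
    have := sub_eq_zero.mp (hz ▸ hz0)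
    exact this
  refine ⟨a, ?_, hu'⟩
  intro ha0
  apply h'.1
  rw [hu', ha0, zero_smul]

/-- conjugation of reflections. -/
lemma IsNormal.conj {g : V ≃ₗᵢ[ℝ] V} {u : V} (h : IsNormal g u) (w : V ≃ₗᵢ[ℝ] V) :
    IsNormal (w * g * w⁻¹) (w u) := by
  constructor
  · simpa using h.1
  · intro x
    have e0 : (w * g * w⁻¹) x = w (g (w⁻¹ x)) := rfl
    have e1 : w (w⁻¹ x) = x := by simp [LinearIsometryEquiv.inv_def]
    have e2 : ⟪w⁻¹ x, u⟫ = ⟪x, w u⟫ := by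
      rw [← w.inner_map_map (w⁻¹ x) u, e1]
    have e3 : ⟪u, u⟫ = ⟪w u, w u⟫ := (w.inner_map_map u u).symm
    rw [e0, h.2 (w⁻¹ x), map_sub, map_smul, e1, e2, e3]

variable (R : Set (V ≃ₗᵢ[ℝ] V))

/-- open chamber of `p` (sign conditions). -/
def Sc (p : V) : Set V :=
  {y : V | ∀ g ∈ R, ∀ u : V, IsNormal g u → 0 < ⟪p, u⟫ * ⟪y, u⟫}

/-- closed chamber of `p`. -/
def Tc (p : V) : Set V :=
  {y : V | ∀ g ∈ R, ∀ u : V, IsNormal g u → 0 ≤ ⟪p, u⟫ * ⟪y, u⟫}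

variable {R}

lemma Sc_subset_Tc (p : V) : Sc R p ⊆ Tc R p :=
  fun y hy g hg u hu => (hy g hg u hu).le

lemma Sc_open (hfin : R.Finite) (href : ∀ g ∈ R, ∃ u, IsNormal g u) (p : V) :
    IsOpen (Sc R p) := by
  have hrw : Sc R p = ⋂ g ∈ R, {y : V | ∀ u : V, IsNormal g u → 0 < ⟪p, u⟫ * ⟪y, u⟫} := by
    ext y
    simp only [Sc, Set.mem_setOf_eq, Set.mem_iInter]
  rw [hrw]
  refine hfin.isOpen_biInter fun g hg => ?_
  obtain ⟨u₀, hu₀⟩ := href g hg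
  have hrw2 : {y : V | ∀ u : V, IsNormal g u → 0 < ⟪p, u⟫ * ⟪y, u⟫}
      = {y : V | 0 < ⟪p, u₀⟫ * ⟪y, u₀⟫} := by
    ext y
    constructor
    · exact fun h => h u₀ hu₀
    · intro h u hu
      obtain ⟨c, hc, rfl⟩ := hu₀.prop hu
      rw [real_inner_smul_right, real_inner_smul_right]
      have hc2 : 0 < c * c := mul_self_pos.mpr hc
      nlinarith [mul_pos hc2 h]
  rw [hrw2]
  exact isOpen_lt continuous_const (continuous_const.mul (continuous_id.inner continuous_const))

lemma Sc_convex (p : V) : Convex ℝ (Sc R p) := by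
  intro y hy z hz a b ha hb hab
  intro g hg u hu
  have h1 := hy g hg u hu
  have h2 := hz g hg u hu
  have e : ⟪a • y + b • z, u⟫ = a * ⟪y, u⟫ + b * ⟪z, u⟫ := by
    rw [inner_add_left, real_inner_smul_left, real_inner_smul_left]
  rw [e]
  rcases eq_or_lt_of_le ha with h | h
  · have hb1 : b = 1 := by linarith
    rw [← h, hb1]
    simpa using h2
  · nlinarith [mul_nonneg hb h2.le]

lemma mem_Sc_self (href : ∀ g ∈ R, ∃ u, IsNormal g u) {p : V}
    (hp : p ∉ ⋃ g ∈ R, {x : V | g x = x}) : p ∈ Sc R p := by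
  intro g hg u hu
  have hgp : g p ≠ p := by
    intro h
    exact hp (Set.mem_biUnion hg h)
  have : ⟪p, u⟫ ≠ 0 := fun h => hgp ((hu.fixed_iff p).mpr h)
  exact mul_self_pos.mpr this

lemma Sc_subset_compl (href : ∀ g ∈ R, ∃ u, IsNormal g u) (p : V) :
    Sc R p ⊆ (⋃ g ∈ R, {x : V | g x = x})ᶜ := by
  intro y hy hmem
  obtain ⟨g, hg, hfix⟩ := Set.mem_iUnion₂.mp hmem
  obtain ⟨u, hu⟩ := href g hg
  have : ⟪y, u⟫ = 0 := (hu.fixed_iff y).mp hfix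
  have h2 := hy g hg u hu
  rw [this, mul_zero] at h2
  exact lt_irrefl _ h2

lemma comp_eq (hfin : R.Finite) (href : ∀ g ∈ R, ∃ u, IsNormal g u) {p : V}
    (hp : p ∉ ⋃ g ∈ R, {x : V | g x = x}) :
    connectedComponentIn (⋃ g ∈ R, {x : V | g x = x})ᶜ p = Sc R p := by
  set M := ⋃ g ∈ R, {x : V | g x = x} with hM
  have hpS : p ∈ Sc R p := mem_Sc_self href hp
  apply Set.Subset.antisymm
  · intro y hy g hg u hu
    obtain ⟨u', hu'⟩ := href g hg
    have hpc : p ∈ connectedComponentIn Mᶜ p := mem_connectedComponentIn hp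
    by_contra hcon
    push_neg at hcon
    have hfp : (0:ℝ) ≤ ⟪p, u⟫ * ⟪p, u⟫ := mul_self_nonneg _
    have hppos : 0 < ⟪p, u⟫ * ⟪p, u⟫ := hpS g hg u hu
    obtain ⟨z, hzc, hz0⟩ := (isPreconnected_connectedComponentIn
      (x := p) (F := Mᶜ)).intermediate_value₂ hy hpc
      ((continuous_const.mul (continuous_id.inner continuous_const)).continuousOn)
      (continuousOn_const (c := (0:ℝ))) hcon hppos.le
    have hzu : ⟪z, u⟫ = 0 := by
      have hpu : ⟪p, u⟫ ≠ 0 := fun h => by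
        rw [h, zero_mul] at hppos; exact lt_irrefl _ hppos
      rcases mul_eq_zero.mp hz0 with h | h
      · exact absurd h hpu
      · exact h
    have hzM : z ∈ M := Set.mem_biUnion hg ((hu.fixed_iff z).mpr hzu)
    exact (connectedComponentIn_subset Mᶜ p hzc) hzM
  · exact (Sc_convex p).isPreconnected.subset_connectedComponentIn hpS
      (Sc_subset_compl href p)

lemma Tc_closed (p : V) : IsClosed (Tc R p) := by
  have hrw : Tc R p = ⋂ (g : V ≃ₗᵢ[ℝ] V) (_ : g ∈ R) (u : V) (_ : IsNormal g u),
      {y : V | 0 ≤ ⟪p, u⟫ * ⟪y, u⟫} := by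
    ext y
    simp only [Tc, Set.mem_setOf_eq, Set.mem_iInter]
  rw [hrw]
  exact isClosed_iInter fun g => isClosed_iInter fun _ => isClosed_iInter fun u =>
    isClosed_iInter fun _ =>
      isClosed_le continuous_const (continuous_const.mul (continuous_id.inner continuous_const))

lemma segment_mem_Sc {p : V} (hp : p ∈ Sc R p) {y : V} (hy : y ∈ Tc R p) {t : ℝ}
    (ht0 : 0 < t) (ht1 : t ≤ 1) : y + t • (p - y) ∈ Sc R p := by
  intro g hg u hu
  have h1 := hy g hg u hu
  have h2 := hp g hg u hu
  have e : ⟪y + t • (p - y), u⟫ = ⟪y, u⟫ + t * (⟪p, u⟫ - ⟪y, u⟫) := by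
    rw [inner_add_left, real_inner_smul_left, inner_sub_left]
  rw [e]
  nlinarith [mul_nonneg (by linarith : (0:ℝ) ≤ 1 - t) h1, mul_pos ht0 h2]

lemma closure_Sc (hfin : R.Finite) (href : ∀ g ∈ R, ∃ u, IsNormal g u) {p : V}
    (hp : p ∈ Sc R p) : closure (Sc R p) = Tc R p := by
  apply Set.Subset.antisymm
  · exact closure_minimal (Sc_subset_Tc p) (Tc_closed p)
  · intro y hy
    have hseq : ∀ n : ℕ, y + ((n:ℝ)+1)⁻¹ • (p - y) ∈ Sc R p := fun n =>
      segment_mem_Sc hp hy (by positivity) (by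
        rw [inv_le_one_iff₀]
        right
        push_cast
        linarith [Nat.cast_nonneg (α := ℝ) n])
    have hlim : Filter.Tendsto (fun n : ℕ => y + ((n:ℝ)+1)⁻¹ • (p - y))
        Filter.atTop (nhds y) := by
      have h1 : Filter.Tendsto (fun n : ℕ => ((n:ℝ)+1)⁻¹) Filter.atTop (nhds 0) := by
        simpa [one_div] using tendsto_one_div_add_atTop_nhds_zero_nat (𝕜 := ℝ)
      have := (h1.smul_const (p - y)).const_add y
      simpa using this
    exact mem_closure_of_tendsto hlim (Filter.Eventually.of_forall hseq)

lemma interior_Tc (hfin : R.Finite) (href : ∀ g ∈ R, ∃ u, IsNormal g u) {p : V}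
    (hp : p ∈ Sc R p) : interior (Tc R p) = Sc R p := by
  apply Set.Subset.antisymm
  · intro y hy
    intro g hg u hu
    have hyT : y ∈ Tc R p := interior_subset hy
    have h1 := hyT g hg u hu
    rcases lt_or_eq_of_le h1 with h | h
    · exact h
    exfalso
    have hpu : ⟪p, u⟫ ≠ 0 := by
      have := hp g hg u hu
      exact fun h0 => by rw [h0, zero_mul] at this; exact lt_irrefl _ this
    have hyu : ⟪y, u⟫ = 0 := by
      rcases mul_eq_zero.mp h.symm with h0 | h0
      · exact absurd h0 hpu
      · exact h0
    obtain ⟨δ, hδ, hball⟩ := Metric.isOpen_iff.mp isOpen_interior y hy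
    set v := ⟪p, u⟫ • u with hv
    have hvn : 0 < ‖v‖ := by
      rw [hv, norm_smul]
      have : ‖u‖ > 0 := norm_pos_iff.mpr hu.1
      have : |⟪p, u⟫| > 0 := abs_pos.mpr hpu
      positivity
    set ε := δ / (2 * ‖v‖) with hε
    have hεpos : 0 < ε := by positivity
    have hmem : y - ε • v ∈ Metric.ball y δ := by
      rw [Metric.mem_ball, dist_eq_norm]
      have : y - ε • v - y = -(ε • v) := by abel
      rw [this, norm_neg, norm_smul, Real.norm_eq_abs, abs_of_pos hεpos, hε]
      rw [div_mul_eq_mul_div, mul_comm]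
      rw [div_lt_iff₀ (by positivity : (0:ℝ) < 2 * ‖v‖)]
      nlinarith
    have hT : y - ε • v ∈ Tc R p := interior_subset (hball hmem)
    have h2 := hT g hg u hu
    have e : ⟪y - ε • v, u⟫ = - (ε * (⟪p, u⟫ * ⟪u, u⟫)) := by
      rw [inner_sub_left, hyu, real_inner_smul_left, hv, real_inner_smul_left]
      ring
    rw [e] at h2
    have huu := hu.inner_self_pos
    nlinarith [mul_pos (mul_pos hεpos (mul_self_pos.mpr hpu)) huu]
  · exact interior_maximal (Sc_subset_Tc p) (Sc_open hfin href p)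

lemma sign_transfer {p q : V} (hq : q ∈ Sc R p) :
    Sc R q = Sc R p ∧ Tc R q = Tc R p := by
  constructor
  · ext y
    constructor
    · intro h g hg u hu
      have h1 := hq g hg u hu
      have h2 := h g hg u hu
      nlinarith [mul_self_pos.mpr (show ⟪q, u⟫ ≠ 0 from fun h0 => by
        rw [h0, mul_zero] at h1; exact lt_irrefl _ h1)]
    · intro h g hg u hu
      have h1 := hq g hg u hu
      have h2 := h g hg u hu
      nlinarith [mul_self_pos.mpr (show ⟪p, u⟫ ≠ 0 from fun h0 => by
        rw [h0, zero_mul] at h1; exact lt_irrefl _ h1)]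
  · ext y
    constructor
    · intro h g hg u hu
      have h1 := hq g hg u hu
      have h2 := h g hg u hu
      nlinarith [mul_self_pos.mpr (show ⟪q, u⟫ ≠ 0 from fun h0 => by
        rw [h0, mul_zero] at h1; exact lt_irrefl _ h1)]
    · intro h g hg u hu
      have h1 := hq g hg u hu
      have h2 := h g hg u hu
      nlinarith [mul_self_pos.mpr (show ⟪p, u⟫ ≠ 0 from fun h0 => by
        rw [h0, zero_mul] at h1; exact lt_irrefl _ h1)]

/-- the set of reflections of `W`. -/
def Rf (W : Subgroup (V ≃ₗᵢ[ℝ] V)) : Set (V ≃ₗᵢ[ℝ] V) :=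
  {g : V ≃ₗᵢ[ℝ] V | g ∈ W ∧ IsLinRefl g}

variable {W : Subgroup (V ≃ₗᵢ[ℝ] V)} {x₀ : V}

lemma stepA (hWfin : (W : Set (V ≃ₗᵢ[ℝ] V)).Finite)
    (hdisj' : ∀ w ∈ W, w ≠ 1 → w x₀ ∉ Sc (Rf W) x₀)
    (hx₀ : x₀ ∈ Sc (Rf W) x₀)
    {p z : V} (hp : p ∈ Sc (Rf W) x₀) (hz : z ∈ Sc (Rf W) x₀)
    {w : V ≃ₗᵢ[ℝ] V} (hw : w ∈ W) :
    ⟪p, w z⟫ ≤ ⟪p, z⟫ := by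
  classical
  set O : Set V := (fun g : V ≃ₗᵢ[ℝ] V => g z) '' (W : Set (V ≃ₗᵢ[ℝ] V)) with hO
  have hOfin : O.Finite := hWfin.image _
  have hOne : O.Nonempty := ⟨z, 1, W.one_mem, rfl⟩
  obtain ⟨v, hvO, hvmax⟩ := Set.exists_max_image O (fun y => ⟪p, y⟫) hOfin hOne
  obtain ⟨w₀, hw₀W, hveq0⟩ := hvO
  have hveq : w₀ z = v := hveq0
  -- v is in the closed chamber
  have hvT : v ∈ Tc (Rf W) x₀ := by
    intro g hg u hu
    have hgW : g ∈ W := hg.1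
    have hgvO : g v ∈ O := ⟨g * w₀, W.mul_mem hgW hw₀W, by
      show (g * w₀) z = g v
      rw [show (g * w₀) z = g (w₀ z) from rfl, hveq]⟩
    have hle := hvmax _ hgvO
    rw [hu.2 v, inner_sub_right, real_inner_smul_right] at hle
    have huu : (0:ℝ) < ⟪u, u⟫ := hu.inner_self_pos
    have h1 : 0 ≤ ⟪v, u⟫ * ⟪p, u⟫ := by
      have h2 : 0 ≤ 2 * ⟪v, u⟫ / ⟪u, u⟫ * ⟪p, u⟫ := by linarith
      have h3 : 2 * ⟪v, u⟫ / ⟪u, u⟫ * ⟪p, u⟫ * ⟪u, u⟫ = 2 * (⟪v, u⟫ * ⟪p, u⟫) := by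
        field_simp
      nlinarith [mul_nonneg h2 huu.le]
    have hpx := hp g hg u hu
    have hpu : ⟪p, u⟫ ≠ 0 := fun h => by rw [h, mul_zero] at hpx; exact lt_irrefl _ hpx
    have hpu2 : 0 < ⟪p, u⟫ * ⟪p, u⟫ := mul_self_pos.mpr hpu
    nlinarith [mul_nonneg h1 hpx.le]
  -- v is in the strict chamber of w₀ x₀
  have hvW : ∀ g ∈ Rf W, ∀ u : V, IsNormal g u → 0 < ⟪w₀ x₀, u⟫ * ⟪v, u⟫ := by
    intro g hg u hu
    have hnorm : IsNormal (w₀⁻¹ * g * w₀) (w₀⁻¹ u) := by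
      have := hu.conj w₀⁻¹
      rwa [inv_inv] at this
    have hgc : (w₀⁻¹ * g * w₀) ∈ Rf W :=
      ⟨W.mul_mem (W.mul_mem (W.inv_mem hw₀W) hg.1) hw₀W, ⟨w₀⁻¹ u, hnorm⟩⟩
    have hzz := hz _ hgc _ hnorm
    have e0 : w₀ (w₀⁻¹ u) = u := by simp [LinearIsometryEquiv.inv_def]
    have e1 : ⟪x₀, w₀⁻¹ u⟫ = ⟪w₀ x₀, u⟫ := by
      rw [← w₀.inner_map_map x₀ (w₀⁻¹ u), e0]
    have e2 : ⟪z, w₀⁻¹ u⟫ = ⟪v, u⟫ := by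
      rw [← w₀.inner_map_map z (w₀⁻¹ u), e0, hveq]
    rw [e1, e2] at hzz
    exact hzz
  -- hence w₀ = 1
  have hw₀1 : w₀ = 1 := by
    by_contra hne
    apply hdisj' w₀ hw₀W hne
    intro g hg u hu
    have A := hvT g hg u hu
    have B := hvW g hg u hu
    have Cx := hx₀ g hg u hu
    have hvu : ⟪v, u⟫ ≠ 0 := fun h => by rw [h, mul_zero] at B; exact lt_irrefl _ B
    have hau : ⟪x₀, u⟫ ≠ 0 := fun h => by rw [h, zero_mul] at Cx; exact lt_irrefl _ Cx
    have hac : 0 < ⟪x₀, u⟫ * ⟪v, u⟫ := A.lt_of_ne' (mul_ne_zero hau hvu)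
    nlinarith [mul_pos hac B, mul_self_pos.mpr hvu]
  have hvz : v = z := by
    rw [← hveq, hw₀1]
    rfl
  have hwzO : w z ∈ O := ⟨w, hw, rfl⟩
  have := hvmax _ hwzO
  rwa [hvz] at this

lemma stepB (hWfin : (W : Set (V ≃ₗᵢ[ℝ] V)).Finite)
    (hdisj' : ∀ w ∈ W, w ≠ 1 → w x₀ ∉ Sc (Rf W) x₀)
    (hx₀ : x₀ ∈ Sc (Rf W) x₀)
    {p x : V} (hp : p ∈ Sc (Rf W) x₀) (hx : x ∈ Tc (Rf W) x₀)
    {w : V ≃ₗᵢ[ℝ] V} (hw : w ∈ W) :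
    ⟪p, w x⟫ ≤ ⟪p, x⟫ := by
  set tn : ℕ → ℝ := fun n => ((n:ℝ)+1)⁻¹ with htn
  have htn0 : ∀ n, 0 < tn n := fun n => by positivity
  have htn1 : ∀ n, tn n ≤ 1 := fun n => by
    rw [htn]
    rw [inv_le_one_iff₀]
    right
    linarith [Nat.cast_nonneg (α := ℝ) n]
  have hxn : ∀ n : ℕ, x + tn n • (p - x) ∈ Sc (Rf W) x₀ := by
    intro n
    intro g hg u hu
    have h1 := hx g hg u hu
    have h2 := hp g hg u hu
    have hx0g := hx₀ g hg u hu
    have e : ⟪x + tn n • (p - x), u⟫ = ⟪x, u⟫ + tn n * (⟪p, u⟫ - ⟪x, u⟫) := by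
      rw [inner_add_left, real_inner_smul_left, inner_sub_left]
    rw [e]
    nlinarith [mul_nonneg (by linarith [htn1 n] : (0:ℝ) ≤ 1 - tn n) h1,
      mul_pos (htn0 n) h2]
  have key : ∀ n : ℕ, ⟪p, w x⟫ + tn n * ⟪p, w p - w x⟫ ≤ ⟪p, x⟫ + tn n * ⟪p, p - x⟫ := by
    intro n
    have hA := stepA hWfin hdisj' hx₀ hp (hxn n) hw
    have e : w (x + tn n • (p - x)) = w x + tn n • (w p - w x) := by
      rw [map_add, map_smul, map_sub]
    rw [e, inner_add_right, real_inner_smul_right, inner_add_right,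
      real_inner_smul_right] at hA
    exact hA
  have hlim : Filter.Tendsto tn Filter.atTop (nhds 0) := by
    simpa [htn, one_div] using tendsto_one_div_add_atTop_nhds_zero_nat (𝕜 := ℝ)
  have l1 : Filter.Tendsto (fun n => ⟪p, w x⟫ + tn n * ⟪p, w p - w x⟫)
      Filter.atTop (nhds ⟪p, w x⟫) := by
    have := (hlim.mul_const ⟪p, w p - w x⟫).const_add ⟪p, w x⟫
    simpa using this
  have l2 : Filter.Tendsto (fun n => ⟪p, x⟫ + tn n * ⟪p, p - x⟫)
      Filter.atTop (nhds ⟪p, x⟫) := by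
    have := (hlim.mul_const ⟪p, p - x⟫).const_add ⟪p, x⟫
    simpa using this
  exact le_of_tendsto_of_tendsto' l1 l2 key

end DLOD

/-- For `x₀ ∈ C°` and `x ∈ C`, every `w ∈ W` satisfies `‖x₀ - w x‖ ≥ ‖x₀ - x‖`, with strict
inequality whenever `w x ≠ x`. -/
theorem dist_le_orbit_dist {V : Type*} [NormedAddCommGroup V] [InnerProductSpace ℝ V]
    [FiniteDimensional ℝ V]
    (W : Subgroup (V ≃ₗᵢ[ℝ] V)) (C : Set V)
    (hWfin : (W : Set (V ≃ₗᵢ[ℝ] V)).Finite)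
    (hWgen : Subgroup.closure {g : V ≃ₗᵢ[ℝ] V | g ∈ W ∧ IsLinRefl g} = W)
    (hC : IsChamber W C)
    (hcover : ∀ v : V, ∃ w ∈ W, ∃ x ∈ C, w x = v)
    (hdisj : ∀ w ∈ W, ∀ w' ∈ W, w ≠ w' →
      ∀ x ∈ interior C, ∀ x' ∈ interior C, w x ≠ w' x')
    (x₀ x : V) (hx₀ : x₀ ∈ interior C) (hx : x ∈ C) :
    (∀ w ∈ W, ‖x₀ - x‖ ≤ ‖x₀ - w x‖) ∧
    (∀ w ∈ W, w x ≠ x → ‖x₀ - x‖ < ‖x₀ - w x‖) := by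
  classical
  obtain ⟨p', hp'M, hCeq⟩ := hC
  set R : Set (V ≃ₗᵢ[ℝ] V) := DLOD.Rf W with hR
  have hRfin : R.Finite := hWfin.subset fun g hg => hg.1
  have href : ∀ g ∈ R, ∃ u, DLOD.IsNormal g u := fun g hg => hg.2
  have hM : mirrors W = ⋃ g ∈ R, {x : V | g x = x} := rfl
  rw [hM] at hp'M hCeq
  have hp'M' : p' ∉ ⋃ g ∈ R, {x : V | g x = x} := hp'M
  have hp'S : p' ∈ DLOD.Sc R p' := DLOD.mem_Sc_self href hp'M'
  have hcomp := DLOD.comp_eq hRfin href hp'M'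
  have hCT : C = DLOD.Tc R p' := by
    rw [hCeq, hcomp, DLOD.closure_Sc hRfin href hp'S]
  have hIntC : interior C = DLOD.Sc R p' := by
    rw [hCT, DLOD.interior_Tc hRfin href hp'S]
  have hx₀S' : x₀ ∈ DLOD.Sc R p' := hIntC ▸ hx₀
  obtain ⟨hSeq, hTeq⟩ := DLOD.sign_transfer hx₀S'
  have hx₀S : x₀ ∈ DLOD.Sc R x₀ := by rw [hSeq]; exact hx₀S'
  have hxT : x ∈ DLOD.Tc R x₀ := by rw [hTeq, ← hCT]; exact hx
  have hdisj' : ∀ w ∈ W, w ≠ 1 → w x₀ ∉ DLOD.Sc R x₀ := by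
    intro w hw hne hmem
    have h2 : w x₀ ∈ interior C := by rw [hIntC, ← hSeq]; exact hmem
    exact hdisj w hw 1 W.one_mem hne x₀ hx₀ (w x₀) h2 rfl
  have weak : ∀ w ∈ W, ⟪x₀, w x⟫ ≤ ⟪x₀, x⟫ := fun w hw =>
    DLOD.stepB hWfin hdisj' hx₀S hx₀S hxT hw
  have strict : ∀ w ∈ W, w x ≠ x → ⟪x₀, w x⟫ < ⟪x₀, x⟫ := by
    intro w hw hne
    rcases lt_or_eq_of_le (weak w hw) with h | h
    · exact h
    exfalso
    have hwxT : w x ∈ DLOD.Tc R x₀ := by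
      intro g hg u hu
      have hgW : g ∈ W := hg.1
      have h1 : ⟪x₀, g (w x)⟫ ≤ ⟪x₀, x⟫ := by
        have := DLOD.stepB hWfin hdisj' hx₀S hx₀S hxT (W.mul_mem hgW hw)
        rwa [show (g * w) x = g (w x) from rfl] at this
      rw [← h] at h1
      rw [hu.2 (w x), inner_sub_right, real_inner_smul_right] at h1
      have huu : (0:ℝ) < ⟪u, u⟫ := hu.inner_self_pos
      have h2 : 0 ≤ 2 * ⟪w x, u⟫ / ⟪u, u⟫ * ⟪x₀, u⟫ := by linarith
      have h3 : 2 * ⟪w x, u⟫ / ⟪u, u⟫ * ⟪x₀, u⟫ * ⟪u, u⟫ = 2 * (⟪w x, u⟫ * ⟪x₀, u⟫) := by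
        field_simp
      nlinarith [mul_nonneg h2 huu.le]
    have hpeq : ∀ p ∈ DLOD.Sc R x₀, ⟪p, w x - x⟫ = 0 := by
      intro p hp
      have h1 := DLOD.stepB hWfin hdisj' hx₀S hp hxT hw
      have h2 := DLOD.stepB hWfin hdisj' hx₀S hp hwxT (W.inv_mem hw)
      have e : w⁻¹ (w x) = x := by simp [LinearIsometryEquiv.inv_def]
      rw [e] at h2
      rw [inner_sub_right]
      linarith
    have hSopen : IsOpen (DLOD.Sc R x₀) := DLOD.Sc_open hRfin href x₀
    obtain ⟨δ, hδ, hball⟩ := Metric.isOpen_iff.mp hSopen x₀ hx₀S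
    set d := w x - x with hd
    have hdne : d ≠ 0 := sub_ne_zero.mpr hne
    have hdn : 0 < ‖d‖ := norm_pos_iff.mpr hdne
    set c := δ / (2 * ‖d‖) with hc
    have hcpos : 0 < c := by positivity
    have hmem : x₀ + c • d ∈ Metric.ball x₀ δ := by
      rw [Metric.mem_ball, dist_eq_norm]
      have e : x₀ + c • d - x₀ = c • d := by abel
      rw [e, norm_smul, Real.norm_eq_abs, abs_of_pos hcpos, hc]
      rw [div_mul_eq_mul_div, mul_comm]
      rw [div_lt_iff₀ (by positivity : (0:ℝ) < 2 * ‖d‖)]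
      nlinarith
    have h0 := hpeq _ (hball hmem)
    have hx₀0 := hpeq _ hx₀S
    rw [inner_add_left, real_inner_smul_left, hx₀0, real_inner_self_eq_norm_sq] at h0
    have : c * ‖d‖^2 > 0 := by positivity
    linarith
  constructor
  · intro w hw
    have h := weak w hw
    have e1 := norm_sub_sq_real x₀ x
    have e2 := norm_sub_sq_real x₀ (w x)
    have e3 : ‖w x‖ = ‖x‖ := w.norm_map x
    rw [e3] at e2
    nlinarith [norm_nonneg (x₀ - x), norm_nonneg (x₀ - w x)]
  · intro w hw hne
    have h := strict w hw hne
    have e1 := norm_sub_sq_real x₀ x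
    have e2 := norm_sub_sq_real x₀ (w x)
    have e3 : ‖w x‖ = ‖x‖ := w.norm_map x
    rw [e3] at e2
    nlinarith [norm_nonneg (x₀ - x), norm_nonneg (x₀ - w x)]
end
end

section
/- (Waldspurger) The dual cone C* is the disjoint union of the sets (1 − w)(C°) over w ∈ W: for every w ∈ W and x ∈ C° the vector x − w x lies in C*; every u ∈ C* can be written as u = x − w x for some w ∈ W and x ∈ C°; and for distinct w, w' ∈ W the sets {x − w x : x ∈ C°} and {x − w' x : x ∈ C°} are disjoint. -/
set_option maxHeartbeats 1000000


open scoped RealInnerProductSpace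

noncomputable section

namespace WaldAux

variable {V : Type*} [NormedAddCommGroup V] [InnerProductSpace ℝ V]

/-- If `b` is a root vector for the reflection `g`, then `g x = x ↔ ⟪x, b⟫ = 0`. -/
theorem refl_fix_iff (g : V ≃ₗᵢ[ℝ] V) (b : V) (hb : b ≠ 0)
    (hf : ∀ x : V, g x = x - ((2 * ⟪x, b⟫) / ⟪b, b⟫) • b) (x : V) :
    g x = x ↔ ⟪x, b⟫ = 0 := by
  have hbb : ⟪b, b⟫ ≠ 0 := fun h => hb ((inner_self_eq_zero (𝕜 := ℝ)).1 h)
  constructor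
  · intro h
    have h2 : x - ((2 * ⟪x, b⟫) / ⟪b, b⟫) • b = x := by rw [← hf x, h]
    have h3 : ((2 * ⟪x, b⟫) / ⟪b, b⟫) • b = 0 := by
      have := sub_eq_self.mp h2; exact this
    rcases smul_eq_zero.mp h3 with h4 | h4
    · have h5 := div_eq_zero_iff.mp h4
      rcases h5 with h5 | h5
      · linarith
      · exact absurd h5 hbb
    · exact absurd h4 hb
  · intro h
    rw [hf x, h]
    simp

/-- Conjugates of reflections are reflections. -/
theorem isLinRefl_conj {g v : V ≃ₗᵢ[ℝ] V} (hg : IsLinRefl g) :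
    IsLinRefl (v⁻¹ * g * v) := by
  obtain ⟨b, hb, hf⟩ := hg
  refine ⟨v⁻¹ b, fun h => hb (by simpa using congrArg v h), fun x => ?_⟩
  have h1 : (v⁻¹ * g * v) x = v⁻¹ (g (v x)) := rfl
  rw [h1, hf (v x)]
  have h2 : ⟪v x, b⟫ = ⟪x, v⁻¹ b⟫ := by
    have := v⁻¹.inner_map_map (v x) b
    simpa using this.symm
  have h3 : ⟪b, b⟫ = ⟪v⁻¹ b, v⁻¹ b⟫ := (v⁻¹.inner_map_map b b).symm
  rw [map_sub, map_smul, h2, h3]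
  congr 1
  exact v.symm_apply_apply x



section Core

variable (W : Subgroup (V ≃ₗᵢ[ℝ] V)) (x₀ : V)

/-- The set of reflections of `W` fixing the point `p`. -/
def RS (p : V) : Set (V ≃ₗᵢ[ℝ] V) := {g | g ∈ W ∧ IsLinRefl g ∧ g p = p}

/-- The reflection subgroup generated by the reflections fixing `p`. -/
def Hs (p : V) : Subgroup (V ≃ₗᵢ[ℝ] V) := Subgroup.closure (RS W p)

open Classical in
/-- A choice of root for each reflection, normalized to pair positively with `x₀`. -/
def rbeta (g : V ≃ₗᵢ[ℝ] V) : V :=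
  if h : IsLinRefl g then
    (if 0 < ⟪x₀, Classical.choose h⟫ then Classical.choose h else -Classical.choose h)
  else 0

/-- The closed chamber of the subgroup attached to `p`. -/
def Cp (p : V) : Set V := {v | ∀ g ∈ RS W p, 0 ≤ ⟪v, rbeta x₀ g⟫}

/-- The open chamber of the subgroup attached to `p`. -/
def Up (p : V) : Set V := {v | ∀ g ∈ RS W p, 0 < ⟪v, rbeta x₀ g⟫}

/-- The span of the roots attached to `p`. -/
def Lsp (p : V) : Submodule ℝ V := Submodule.span ℝ (rbeta x₀ '' RS W p)

variable {W x₀}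

theorem mem_Cp {p v : V} : v ∈ Cp W x₀ p ↔ ∀ g ∈ RS W p, 0 ≤ ⟪v, rbeta x₀ g⟫ := Iff.rfl

theorem mem_Up {p v : V} : v ∈ Up W x₀ p ↔ ∀ g ∈ RS W p, 0 < ⟪v, rbeta x₀ g⟫ := Iff.rfl

theorem rbeta_spec {g : V ≃ₗᵢ[ℝ] V} (hg : IsLinRefl g) (hx : g x₀ ≠ x₀) :
    rbeta x₀ g ≠ 0 ∧ 0 < ⟪x₀, rbeta x₀ g⟫ ∧
      (∀ x, g x = x - ((2 * ⟪x, rbeta x₀ g⟫) / ⟪rbeta x₀ g, rbeta x₀ g⟫) • rbeta x₀ g) := by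
  classical
  have hb := Classical.choose_spec hg
  set b := Classical.choose hg with hbdef
  obtain ⟨hb0, hbf⟩ := hb
  have hx0 : ⟪x₀, b⟫ ≠ 0 := by
    intro h
    exact hx ((refl_fix_iff g b hb0 hbf x₀).2 h)
  unfold rbeta
  rw [dif_pos hg, ← hbdef]
  by_cases hpos : 0 < ⟪x₀, b⟫
  · rw [if_pos hpos]
    exact ⟨hb0, hpos, hbf⟩
  · rw [if_neg hpos]
    have hneg : ⟪x₀, b⟫ < 0 := lt_of_le_of_ne (not_lt.1 hpos) hx0
    refine ⟨neg_ne_zero.2 hb0, by rw [inner_neg_right]; linarith, fun x => ?_⟩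
    rw [hbf x]
    congr 1
    rw [inner_neg_right, inner_neg_neg, smul_neg, ← neg_smul]
    congr 1
    field_simp

/-- Shorthand for the regularity hypothesis on `x₀`. -/
def RegPt (W : Subgroup (V ≃ₗᵢ[ℝ] V)) (x₀ : V) : Prop :=
  ∀ g : V ≃ₗᵢ[ℝ] V, g ∈ W → IsLinRefl g → g x₀ ≠ x₀

theorem beta_ne (hreg : RegPt W x₀) {p : V} {g : V ≃ₗᵢ[ℝ] V} (hg : g ∈ RS W p) :
    rbeta x₀ g ≠ 0 :=
  (rbeta_spec hg.2.1 (hreg g hg.1 hg.2.1)).1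

theorem beta_pos₀ (hreg : RegPt W x₀) {p : V} {g : V ≃ₗᵢ[ℝ] V} (hg : g ∈ RS W p) :
    0 < ⟪x₀, rbeta x₀ g⟫ :=
  (rbeta_spec hg.2.1 (hreg g hg.1 hg.2.1)).2.1

theorem beta_formula (hreg : RegPt W x₀) {p : V} {g : V ≃ₗᵢ[ℝ] V} (hg : g ∈ RS W p) (x : V) :
    g x = x - ((2 * ⟪x, rbeta x₀ g⟫) / ⟪rbeta x₀ g, rbeta x₀ g⟫) • rbeta x₀ g :=
  (rbeta_spec hg.2.1 (hreg g hg.1 hg.2.1)).2.2 x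

theorem beta_fix_iff (hreg : RegPt W x₀) {p : V} {g : V ≃ₗᵢ[ℝ] V} (hg : g ∈ RS W p) (x : V) :
    g x = x ↔ ⟪x, rbeta x₀ g⟫ = 0 :=
  refl_fix_iff g _ (beta_ne hreg hg) (beta_formula hreg hg) x

theorem inner_reflect (hreg : RegPt W x₀) {p : V} {g : V ≃ₗᵢ[ℝ] V} (hg : g ∈ RS W p) (x y : V) :
    ⟪g x, y⟫ = ⟪x, y⟫ - ((2 * ⟪x, rbeta x₀ g⟫) / ⟪rbeta x₀ g, rbeta x₀ g⟫) * ⟪rbeta x₀ g, y⟫ := by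
  rw [beta_formula hreg hg x, inner_sub_left, real_inner_smul_left]

theorem RS_finite (hWfin : (W : Set (V ≃ₗᵢ[ℝ] V)).Finite) (p : V) : (RS W p).Finite :=
  hWfin.subset (fun g hg => hg.1)

theorem Hs_le_W (p : V) : Hs W p ≤ W := (Subgroup.closure_le W).2 (fun g hg => hg.1)

theorem Hs_finite (hWfin : (W : Set (V ≃ₗᵢ[ℝ] V)).Finite) (p : V) :
    ((Hs W p : Set (V ≃ₗᵢ[ℝ] V))).Finite :=
  hWfin.subset (Hs_le_W p)

theorem fix_of_closure {S : Set (V ≃ₗᵢ[ℝ] V)} {q : V} (hS : ∀ g ∈ S, g q = q)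
    {v : V ≃ₗᵢ[ℝ] V} (hv : v ∈ Subgroup.closure S) : v q = q := by
  induction hv using Subgroup.closure_induction with
  | mem g hg => exact hS g hg
  | one => rfl
  | mul a b _ _ ha hb =>
      have : (a * b) q = a (b q) := rfl
      rw [this, hb, ha]
  | inv a _ ha =>
      have h1 : a⁻¹ q = a⁻¹ (a q) := by rw [ha]
      rw [h1]
      exact a.symm_apply_apply q

theorem Hs_fix {p : V} {v : V ≃ₗᵢ[ℝ] V} (hv : v ∈ Hs W p) : v p = p :=
  fix_of_closure (fun g hg => hg.2.2) hv

theorem conj_mem_RS {p : V} {v g : V ≃ₗᵢ[ℝ] V} (hv : v ∈ Hs W p) (hg : g ∈ RS W p) :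
    (v⁻¹ * g * v) ∈ RS W p := by
  refine ⟨W.mul_mem (W.mul_mem (W.inv_mem (Hs_le_W p hv)) hg.1) (Hs_le_W p hv),
    isLinRefl_conj hg.2.1, ?_⟩
  show v⁻¹ (g (v p)) = p
  have h1 : g (v p) = v p := by rw [Hs_fix hv, hg.2.2]
  rw [h1]
  exact v.symm_apply_apply p

theorem x₀_mem_Up (hreg : RegPt W x₀) (p : V) : x₀ ∈ Up W x₀ p :=
  fun _ hg => beta_pos₀ hreg hg

theorem Up_subset_Cp (p : V) : Up W x₀ p ⊆ Cp W x₀ p :=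
  fun _ hv g hg => le_of_lt (hv g hg)

theorem Cp_closed (p : V) : IsClosed (Cp W x₀ p) := by
  have h : Cp W x₀ p = ⋂ g ∈ RS W p, {v : V | 0 ≤ ⟪v, rbeta x₀ g⟫} := by
    ext v
    simp only [Set.mem_iInter, Set.mem_setOf_eq]
    exact Iff.rfl
  rw [h]
  exact isClosed_biInter fun g _ =>
    isClosed_le continuous_const (Continuous.inner continuous_id continuous_const)

theorem Up_open (hWfin : (W : Set (V ≃ₗᵢ[ℝ] V)).Finite) (p : V) : IsOpen (Up W x₀ p) := by
  have h : Up W x₀ p = ⋂ g ∈ RS W p, {v : V | 0 < ⟪v, rbeta x₀ g⟫} := by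
    ext v
    simp only [Set.mem_iInter, Set.mem_setOf_eq]
    exact Iff.rfl
  rw [h]
  exact (RS_finite hWfin p).isOpen_biInter fun g _ =>
    isOpen_lt continuous_const (Continuous.inner continuous_id continuous_const)

theorem add_smul_x₀_mem_Up (hreg : RegPt W x₀) {p x : V} (hx : x ∈ Cp W x₀ p) {t : ℝ}
    (ht : 0 < t) : x + t • x₀ ∈ Up W x₀ p := by
  intro g hg
  rw [inner_add_left, real_inner_smul_left]
  have h1 := hx g hg
  have h2 := beta_pos₀ hreg hg
  nlinarith

theorem beta_mem_L {p : V} {g : V ≃ₗᵢ[ℝ] V} (hg : g ∈ RS W p) :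
    rbeta x₀ g ∈ Lsp W x₀ p :=
  Submodule.subset_span ⟨g, hg, rfl⟩

theorem map_L_iff (hreg : RegPt W x₀) {p : V} {v : V ≃ₗᵢ[ℝ] V} (hv : v ∈ Hs W p) :
    ∀ z, (v z ∈ Lsp W x₀ p ↔ z ∈ Lsp W x₀ p) := by
  induction hv using Subgroup.closure_induction with
  | mem g hg =>
      intro z
      have hform := beta_formula hreg hg z
      constructor
      · intro h
        have h2 : z = g z + ((2 * ⟪z, rbeta x₀ g⟫) / ⟪rbeta x₀ g, rbeta x₀ g⟫) • rbeta x₀ g := by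
          rw [hform]; abel
        rw [h2]
        exact Submodule.add_mem _ h (Submodule.smul_mem _ _ (beta_mem_L hg))
      · intro h
        rw [hform]
        exact Submodule.sub_mem _ h (Submodule.smul_mem _ _ (beta_mem_L hg))
  | one => intro z; simp
  | mul a b _ _ ha hb =>
      intro z
      have h : (a * b) z = a (b z) := rfl
      rw [h, ha (b z), hb z]
  | inv a _ ha =>
      intro z
      have h2 : a (a⁻¹ z) = z := a.apply_symm_apply z
      have := ha (a⁻¹ z)
      rw [h2] at this
      exact this.symm

end Core

section Machinery

open Filter Topology

variable {W : Subgroup (V ≃ₗᵢ[ℝ] V)} {x₀ : V}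

/-- Shorthand for the regular-disjointness hypothesis (translated to `Up W x₀ 0`.) -/
def Disj0 (W : Subgroup (V ≃ₗᵢ[ℝ] V)) (x₀ : V) : Prop :=
  ∀ w ∈ W, ∀ w' ∈ W, w ≠ w' → ∀ x ∈ Up W x₀ 0, ∀ x' ∈ Up W x₀ 0, w x ≠ w' x'

theorem inner_self_pos' {b : V} (hb : b ≠ 0) : 0 < ⟪b, b⟫ := by
  rw [real_inner_self_eq_norm_sq]
  exact pow_pos (norm_pos_iff.2 hb) 2

theorem eps_mem (hWfin : (W : Set (V ≃ₗᵢ[ℝ] V)).Finite) (hreg : RegPt W x₀)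
    {p x : V} (hp : p ∈ Cp W x₀ 0) (hx : x ∈ Up W x₀ p) :
    ∀ᶠ ε in 𝓝[>] (0:ℝ), p + ε • x ∈ Up W x₀ 0 := by
  have hfin := RS_finite hWfin (0 : V)
  have hall : ∀ g ∈ RS W (0:V), ∀ᶠ ε in 𝓝[>] (0:ℝ), 0 < ⟪p + ε • x, rbeta x₀ g⟫ := by
    intro g hg
    have h1 : (0:ℝ) ≤ ⟪p, rbeta x₀ g⟫ := hp g hg
    rcases h1.eq_or_lt with h2 | h2
    · have hgp : g ∈ RS W p := ⟨hg.1, hg.2.1, (beta_fix_iff hreg hg p).2 h2.symm⟩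
      have h3 : 0 < ⟪x, rbeta x₀ g⟫ := hx g hgp
      refine eventually_mem_nhdsWithin.mono (fun ε hε => ?_)
      rw [inner_add_left, real_inner_smul_left, ← h2]
      have : (0:ℝ) < ε := hε
      nlinarith
    · have hcont : Continuous fun ε : ℝ => ⟪p + ε • x, rbeta x₀ g⟫ :=
        Continuous.inner (continuous_const.add (continuous_id.smul continuous_const))
          continuous_const
      have ht : Tendsto (fun ε : ℝ => ⟪p + ε • x, rbeta x₀ g⟫) (𝓝[>] (0:ℝ))
          (𝓝 ⟪p + (0:ℝ) • x, rbeta x₀ g⟫) :=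
        (hcont.tendsto 0).mono_left nhdsWithin_le_nhds
      have h0 : ⟪p + (0:ℝ) • x, rbeta x₀ g⟫ = ⟪p, rbeta x₀ g⟫ := by simp
      rw [h0] at ht
      exact ht.eventually (lt_mem_nhds h2)
  have := (eventually_all_finite hfin).2 hall
  exact this.mono (fun ε hε g hg => hε g hg)

theorem keydisj (hWfin : (W : Set (V ≃ₗᵢ[ℝ] V)).Finite) (hreg : RegPt W x₀)
    (hdisj0 : Disj0 W x₀) {p : V} (hp : p ∈ Cp W x₀ 0)
    {v : V ≃ₗᵢ[ℝ] V} (hv : v ∈ Hs W p) {x x' : V} (hx : x ∈ Up W x₀ p) (hx' : x' ∈ Up W x₀ p)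
    (hvx : v x = x') : v = 1 := by
  by_contra hne
  obtain ⟨ε, hε1, hε2⟩ :=
    ((eps_mem hWfin hreg hp hx).and (eps_mem hWfin hreg hp hx')).exists
  refine hdisj0 v (Hs_le_W p hv) 1 W.one_mem hne _ hε1 _ hε2 ?_
  have h1 : v (p + ε • x) = p + ε • x' := by
    rw [map_add, map_smul, Hs_fix hv, hvx]
  rw [h1]
  rfl

theorem part1_interior (hWfin : (W : Set (V ≃ₗᵢ[ℝ] V)).Finite) (hreg : RegPt W x₀)
    (hdisj0 : Disj0 W x₀) {p : V} (hp : p ∈ Cp W x₀ 0)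
    {v : V ≃ₗᵢ[ℝ] V} (hv : v ∈ Hs W p) {x y : V} (hx : x ∈ Up W x₀ p) (hy : y ∈ Up W x₀ p) :
    ⟪v x, y⟫ ≤ ⟪x, y⟫ := by
  obtain ⟨vm, hvm, hmax⟩ := Set.exists_max_image (Hs W p : Set (V ≃ₗᵢ[ℝ] V))
    (fun v => ⟪v x, y⟫) (Hs_finite hWfin p) ⟨1, (Hs W p).one_mem⟩
  have hvmUp : vm x ∈ Up W x₀ p := by
    intro g hg
    have hgv : g * vm ∈ Hs W p := (Hs W p).mul_mem (Subgroup.subset_closure hg) hvm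
    have hle := hmax (g * vm) hgv
    have hgvx : (g * vm) x = g (vm x) := rfl
    rw [hgvx, inner_reflect hreg hg (vm x) y] at hle
    have hby : 0 < ⟪rbeta x₀ g, y⟫ := by
      rw [real_inner_comm]; exact hy g hg
    have hbb : 0 < ⟪rbeta x₀ g, rbeta x₀ g⟫ := inner_self_pos' (beta_ne hreg hg)
    have hcoef : 0 ≤ 2 * ⟪vm x, rbeta x₀ g⟫ / ⟪rbeta x₀ g, rbeta x₀ g⟫ := by
      by_contra hlt
      push_neg at hlt
      nlinarith
    have hnn : 0 ≤ ⟪vm x, rbeta x₀ g⟫ := by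
      by_contra hlt
      push_neg at hlt
      have : 2 * ⟪vm x, rbeta x₀ g⟫ / ⟪rbeta x₀ g, rbeta x₀ g⟫ < 0 :=
        div_neg_of_neg_of_pos (by linarith) hbb
      linarith
    rcases hnn.eq_or_lt with heq | hlt
    · exfalso
      have hfix : g (vm x) = vm x := (beta_fix_iff hreg hg (vm x)).2 heq.symm
      have hconj : (vm⁻¹ * g * vm) ∈ RS W p := conj_mem_RS hvm hg
      have hcx : (vm⁻¹ * g * vm) x = x := by
        show vm⁻¹ (g (vm x)) = x
        rw [hfix]
        exact vm.symm_apply_apply x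
      have := (beta_fix_iff hreg hconj x).1 hcx
      have hpos := hx _ hconj
      rw [this] at hpos
      exact lt_irrefl 0 hpos
    · exact hlt
  have hvm1 : vm = 1 := keydisj hWfin hreg hdisj0 hp hvm hx hvmUp rfl
  have h1x : (1 : V ≃ₗᵢ[ℝ] V) x = x := rfl
  calc ⟪v x, y⟫ ≤ ⟪vm x, y⟫ := hmax v hv
    _ = ⟪x, y⟫ := by rw [hvm1, h1x]

theorem part1 (hWfin : (W : Set (V ≃ₗᵢ[ℝ] V)).Finite) (hreg : RegPt W x₀)
    (hdisj0 : Disj0 W x₀) {p : V} (hp : p ∈ Cp W x₀ 0)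
    {v : V ≃ₗᵢ[ℝ] V} (hv : v ∈ Hs W p) {x y : V} (hx : x ∈ Cp W x₀ p) (hy : y ∈ Cp W x₀ p) :
    ⟪v x, y⟫ ≤ ⟪x, y⟫ := by
  have key : ∀ t : ℝ, 0 < t → ⟪v (x + t • x₀), y + t • x₀⟫ ≤ ⟪x + t • x₀, y + t • x₀⟫ :=
    fun t ht => part1_interior hWfin hreg hdisj0 hp hv
      (add_smul_x₀_mem_Up hreg hx ht) (add_smul_x₀_mem_Up hreg hy ht)
  have h1 : Tendsto (fun n : ℕ => (1:ℝ)/(n+1)) atTop (𝓝 0) :=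
    tendsto_one_div_add_atTop_nhds_zero_nat
  have hF : Continuous fun t : ℝ => ⟪v (x + t • x₀), y + t • x₀⟫ :=
    Continuous.inner (v.continuous.comp (continuous_const.add (continuous_id.smul
      continuous_const))) (continuous_const.add (continuous_id.smul continuous_const))
  have hG : Continuous fun t : ℝ => ⟪x + t • x₀, y + t • x₀⟫ :=
    Continuous.inner (continuous_const.add (continuous_id.smul continuous_const))
      (continuous_const.add (continuous_id.smul continuous_const))
  have hFt : Tendsto (fun n : ℕ => ⟪v (x + ((1:ℝ)/(n+1)) • x₀), y + ((1:ℝ)/(n+1)) • x₀⟫)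
      atTop (𝓝 ⟪v x, y⟫) := by
    have := (hF.tendsto 0).comp h1
    simpa [Function.comp_def] using this
  have hGt : Tendsto (fun n : ℕ => ⟪x + ((1:ℝ)/(n+1)) • x₀, y + ((1:ℝ)/(n+1)) • x₀⟫)
      atTop (𝓝 ⟪x, y⟫) := by
    have := (hG.tendsto 0).comp h1
    simpa [Function.comp_def] using this
  refine le_of_tendsto_of_tendsto' hFt hGt (fun n => key _ ?_)
  positivity

theorem part1' (hWfin : (W : Set (V ≃ₗᵢ[ℝ] V)).Finite) (hreg : RegPt W x₀)
    (hdisj0 : Disj0 W x₀) {p : V} (hp : p ∈ Cp W x₀ 0)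
    {v : V ≃ₗᵢ[ℝ] V} (hv : v ∈ Hs W p) {x y : V} (hx : x ∈ Cp W x₀ p) (hy : y ∈ Cp W x₀ p) :
    ⟪x, v y⟫ ≤ ⟪x, y⟫ := by
  have h1 : ⟪v⁻¹ x, y⟫ = ⟪x, v y⟫ := by
    have := v.inner_map_map (v⁻¹ x) y
    have h2 : v (v⁻¹ x) = x := v.apply_symm_apply x
    rw [h2] at this
    exact this.symm
  rw [← h1]
  exact part1 hWfin hreg hdisj0 hp ((Hs W p).inv_mem hv) hx hy

theorem cover (hWfin : (W : Set (V ≃ₗᵢ[ℝ] V)).Finite) (hreg : RegPt W x₀)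
    (p z : V) : ∃ v ∈ Hs W p, v z ∈ Cp W x₀ p := by
  obtain ⟨vm, hvm, hmax⟩ := Set.exists_max_image (Hs W p : Set (V ≃ₗᵢ[ℝ] V))
    (fun v => ⟪v z, x₀⟫) (Hs_finite hWfin p) ⟨1, (Hs W p).one_mem⟩
  refine ⟨vm, hvm, fun g hg => ?_⟩
  have hgv : g * vm ∈ Hs W p := (Hs W p).mul_mem (Subgroup.subset_closure hg) hvm
  have hle := hmax (g * vm) hgv
  have hgvx : (g * vm) z = g (vm z) := rfl
  rw [hgvx, inner_reflect hreg hg (vm z) x₀] at hle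
  have hby : 0 < ⟪rbeta x₀ g, x₀⟫ := by
    rw [real_inner_comm]; exact beta_pos₀ hreg hg
  have hbb : 0 < ⟪rbeta x₀ g, rbeta x₀ g⟫ := inner_self_pos' (beta_ne hreg hg)
  by_contra hlt
  push_neg at hlt
  have : 2 * ⟪vm z, rbeta x₀ g⟫ / ⟪rbeta x₀ g, rbeta x₀ g⟫ < 0 :=
    div_neg_of_neg_of_pos (by linarith) hbb
  nlinarith

variable (W x₀) in
open Classical in
/-- A choice of group element bringing `z` into the chamber of `p`. -/
def repw (p z : V) : V ≃ₗᵢ[ℝ] V :=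
  if h : ∃ v ∈ Hs W p, v z ∈ Cp W x₀ p then h.choose else 1

variable (W x₀) in
/-- The representative of `z` in the chamber of `p`. -/
def rep (p z : V) : V := repw W x₀ p z z

theorem repw_spec (hWfin : (W : Set (V ≃ₗᵢ[ℝ] V)).Finite) (hreg : RegPt W x₀) (p z : V) :
    repw W x₀ p z ∈ Hs W p ∧ rep W x₀ p z ∈ Cp W x₀ p := by
  have h := cover hWfin hreg p z
  rw [repw, rep, repw, dif_pos h]
  exact ⟨h.choose_spec.1, h.choose_spec.2⟩

theorem norm_rep (hWfin : (W : Set (V ≃ₗᵢ[ℝ] V)).Finite) (hreg : RegPt W x₀) (p z : V) :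
    ‖rep W x₀ p z‖ = ‖z‖ := by
  rw [rep]
  exact (repw W x₀ p z).norm_map z

theorem rep_unique (hWfin : (W : Set (V ≃ₗᵢ[ℝ] V)).Finite) (hreg : RegPt W x₀)
    (hdisj0 : Disj0 W x₀) {p : V} (hp : p ∈ Cp W x₀ 0) {v : V ≃ₗᵢ[ℝ] V} (hv : v ∈ Hs W p)
    {z : V} (hvz : v z ∈ Cp W x₀ p) : v z = rep W x₀ p z := by
  obtain ⟨hr1, hr2⟩ := repw_spec hWfin hreg p z
  set r := repw W x₀ p z with hrdef
  set a := v z with hadef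
  set b := rep W x₀ p z with hbdef
  have hab : (r * v⁻¹) a = b := by
    show r (v⁻¹ (v z)) = b
    have h : (v⁻¹ : V ≃ₗᵢ[ℝ] V) (v z) = z := v.symm_apply_apply z
    rw [h]
    rfl
  have h1 : ⟪(r * v⁻¹) a, b⟫ ≤ ⟪a, b⟫ :=
    part1 hWfin hreg hdisj0 hp ((Hs W p).mul_mem hr1 ((Hs W p).inv_mem hv)) hvz hr2
  rw [hab] at h1
  have hbb : ⟪b, b⟫ = ‖z‖^2 := by
    rw [real_inner_self_eq_norm_sq, norm_rep hWfin hreg]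
  have hna : ‖a‖ = ‖z‖ := v.norm_map z
  have hnb : ‖b‖ = ‖z‖ := norm_rep hWfin hreg p z
  have hsub : ‖a - b‖^2 = ‖a‖^2 - 2 * ⟪a, b⟫ + ‖b‖^2 := norm_sub_sq_real a b
  have h2 : ‖a - b‖^2 ≤ 0 := by
    rw [hsub, hna, hnb]
    rw [hbb] at h1
    linarith
  have h3 : ‖a - b‖ = 0 := by
    have h4 : (0:ℝ) ≤ ‖a - b‖ := norm_nonneg _
    nlinarith
  have := norm_eq_zero.1 h3
  have h5 : a = b := by
    have := sub_eq_zero.1 this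
    exact this
  exact h5

theorem rep_inner_ge (hWfin : (W : Set (V ≃ₗᵢ[ℝ] V)).Finite) (hreg : RegPt W x₀)
    (hdisj0 : Disj0 W x₀) {p : V} (hp : p ∈ Cp W x₀ 0) (z z' : V) :
    ⟪z, z'⟫ ≤ ⟪rep W x₀ p z, rep W x₀ p z'⟫ := by
  obtain ⟨hr1, hr2⟩ := repw_spec hWfin hreg p z
  obtain ⟨hr1', hr2'⟩ := repw_spec hWfin hreg p z'
  set r := repw W x₀ p z
  set r' := repw W x₀ p z'
  have h1 : ⟪z, z'⟫ = ⟪rep W x₀ p z, r z'⟫ := (r.inner_map_map z z').symm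
  have h2 : r z' = (r * r'⁻¹) (rep W x₀ p z') := by
    show r z' = r (r'⁻¹ (r' z'))
    have h : (r'⁻¹ : V ≃ₗᵢ[ℝ] V) (r' z') = z' := r'.symm_apply_apply z'
    rw [h]
  rw [h1, h2]
  exact part1' hWfin hreg hdisj0 hp ((Hs W p).mul_mem hr1 ((Hs W p).inv_mem hr1')) hr2 hr2'

theorem rep_nonexpansive (hWfin : (W : Set (V ≃ₗᵢ[ℝ] V)).Finite) (hreg : RegPt W x₀)
    (hdisj0 : Disj0 W x₀) {p : V} (hp : p ∈ Cp W x₀ 0) (z z' : V) :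
    ‖rep W x₀ p z - rep W x₀ p z'‖ ≤ ‖z - z'‖ := by
  have h1 : ‖rep W x₀ p z - rep W x₀ p z'‖^2 ≤ ‖z - z'‖^2 := by
    rw [norm_sub_sq_real, norm_sub_sq_real, norm_rep hWfin hreg, norm_rep hWfin hreg]
    have := rep_inner_ge hWfin hreg hdisj0 hp z z'
    linarith
  have h2 := Real.sqrt_le_sqrt h1
  rwa [Real.sqrt_sq (norm_nonneg _), Real.sqrt_sq (norm_nonneg _)] at h2

end Machinery

section Solutions

open Filter Topology Bornology Metric

variable [FiniteDimensional ℝ V] {W : Subgroup (V ≃ₗᵢ[ℝ] V)} {x₀ : V}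

theorem sol_inner {w : V ≃ₗᵢ[ℝ] V} {x u : V} (h : w x = x - u) : 2 * ⟪u, x⟫ = ‖u‖^2 := by
  have h1 : ‖x - u‖ = ‖x‖ := by rw [← h]; exact w.norm_map x
  have h2 : ‖x - u‖^2 = ‖x‖^2 - 2 * ⟪x, u⟫ + ‖u‖^2 := norm_sub_sq_real x u
  rw [h1] at h2
  rw [real_inner_comm]
  linarith

theorem half_id (w : V ≃ₗᵢ[ℝ] V) (ξ : V) : 2 * ⟪ξ, ξ - w ξ⟫ = ‖ξ - w ξ‖^2 := by
  have h1 : ‖ξ - w ξ‖^2 = ‖ξ‖^2 - 2 * ⟪ξ, w ξ⟫ + ‖w ξ‖^2 := norm_sub_sq_real ξ (w ξ)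
  have h2 : ‖w ξ‖ = ‖ξ‖ := w.norm_map ξ
  rw [h2] at h1
  rw [inner_sub_right, real_inner_self_eq_norm_sq]
  linarith

theorem midsol (hWfin : (W : Set (V ≃ₗᵢ[ℝ] V)).Finite) (hreg : RegPt W x₀)
    (hdisj0 : Disj0 W x₀) {p : V} (hp : p ∈ Cp W x₀ 0) {u x x' : V} {w w' : V ≃ₗᵢ[ℝ] V}
    (hx : x ∈ Cp W x₀ p) (hx' : x' ∈ Cp W x₀ p) (hw : w ∈ Hs W p) (hweq : w x = x - u)
    (hw' : w' ∈ Hs W p) (hw'eq : w' x' = x' - u) :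
    ∃ v ∈ Hs W p, v ((2⁻¹:ℝ) • (x + x')) = (2⁻¹:ℝ) • (x + x') - u := by
  set m := (2⁻¹:ℝ) • (x + x') with hm
  have hxrep : rep W x₀ p (x - u) = x := by
    have hinv : (w⁻¹ : V ≃ₗᵢ[ℝ] V) (x - u) = x := by
      rw [← hweq]; exact w.symm_apply_apply x
    have := rep_unique hWfin hreg hdisj0 hp ((Hs W p).inv_mem hw)
      (z := x - u) (by rw [hinv]; exact hx)
    rw [hinv] at this
    exact this.symm
  have hx'rep : rep W x₀ p (x' - u) = x' := by
    have hinv : (w'⁻¹ : V ≃ₗᵢ[ℝ] V) (x' - u) = x' := by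
      rw [← hw'eq]; exact w'.symm_apply_apply x'
    have := rep_unique hWfin hreg hdisj0 hp ((Hs W p).inv_mem hw')
      (z := x' - u) (by rw [hinv]; exact hx')
    rw [hinv] at this
    exact this.symm
  set z := rep W x₀ p (m - u) with hz
  have ha : ‖z - x‖ ≤ 2⁻¹ * ‖x' - x‖ := by
    have h1 := rep_nonexpansive hWfin hreg hdisj0 hp (m - u) (x - u)
    rw [hxrep] at h1
    have h2 : m - u - (x - u) = m - x := by abel
    rw [h2] at h1
    have h3 : m - x = (2⁻¹:ℝ) • (x' - x) := by
      rw [hm]; module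
    rw [h3, norm_smul] at h1
    simpa using h1
  have hb : ‖z - x'‖ ≤ 2⁻¹ * ‖x' - x‖ := by
    have h1 := rep_nonexpansive hWfin hreg hdisj0 hp (m - u) (x' - u)
    rw [hx'rep] at h1
    have h2 : m - u - (x' - u) = m - x' := by abel
    rw [h2] at h1
    have h3 : m - x' = (2⁻¹:ℝ) • (x - x') := by
      rw [hm]; module
    rw [h3, norm_smul, norm_sub_rev x x'] at h1
    simpa using h1
  have hzm : z = m := by
    set a := z - x with hadef
    set b := x' - z with hbdef
    have hab : a + b = x' - x := by rw [hadef, hbdef]; abel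
    have hs : ‖a + b‖^2 = ‖a‖^2 + 2 * ⟪a, b⟫ + ‖b‖^2 := norm_add_sq_real a b
    rw [hab] at hs
    have hd : ‖a - b‖^2 = ‖a‖^2 - 2 * ⟪a, b⟫ + ‖b‖^2 := norm_sub_sq_real a b
    have hb' : ‖b‖ ≤ 2⁻¹ * ‖x' - x‖ := by
      rw [hbdef, norm_sub_rev]; exact hb
    have hsq1 : ‖a‖^2 ≤ (2⁻¹ * ‖x' - x‖)^2 := by
      have := norm_nonneg a; nlinarith [ha]
    have hsq2 : ‖b‖^2 ≤ (2⁻¹ * ‖x' - x‖)^2 := by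
      have := norm_nonneg b; nlinarith [hb']
    have hdz : ‖a - b‖^2 ≤ 0 := by nlinarith
    have h0 : ‖a - b‖ = 0 := by
      have := norm_nonneg (a - b); nlinarith
    have heq : a = b := sub_eq_zero.1 (norm_eq_zero.1 h0)
    have h4 : z - x = x' - z := heq
    have h5 : z + z = x' + x := sub_eq_sub_iff_add_eq_add.mp h4
    have h2z : x + x' = z + z := by rw [add_comm x x']; exact h5.symm
    rw [hm, h2z, ← two_smul ℝ z, smul_smul]
    norm_num
  have hv0 := repw_spec hWfin hreg p (m - u)
  refine ⟨(repw W x₀ p (m - u))⁻¹, (Hs W p).inv_mem hv0.1, ?_⟩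
  have h6 : repw W x₀ p (m - u) (m - u) = m := by
    have : rep W x₀ p (m - u) = repw W x₀ p (m - u) (m - u) := rfl
    rw [← this, ← hz, hzm]
  have inv_of : ∀ (e : V ≃ₗᵢ[ℝ] V) (a b : V), e b = a → e⁻¹ a = b := by
    intro e a b h
    rw [← h]
    exact e.symm_apply_apply b
  exact inv_of _ m (m - u) h6

theorem subseq_const_w (hWfin : (W : Set (V ≃ₗᵢ[ℝ] V)).Finite) {p : V}
    (ws : ℕ → V ≃ₗᵢ[ℝ] V) (hws : ∀ n, ws n ∈ Hs W p)
    (xs : ℕ → V) {M : ℝ} (hbd : ∀ n, ‖xs n‖ ≤ M) :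
    ∃ w ∈ Hs W p, ∃ xl : V, ∃ φ : ℕ → ℕ, StrictMono φ ∧ (∀ k, ws (φ k) = w) ∧
      Tendsto (fun k => xs (φ k)) atTop (𝓝 xl) := by
  classical
  haveI : Finite ↥((Hs W p : Set (V ≃ₗᵢ[ℝ] V))) := (Hs_finite hWfin p).to_subtype
  set f : ℕ → ↥((Hs W p : Set (V ≃ₗᵢ[ℝ] V))) := fun n => ⟨ws n, hws n⟩ with hf
  obtain ⟨w₀, hw₀⟩ := Finite.exists_infinite_fiber f
  set S : Set ℕ := f ⁻¹' {w₀} with hS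
  haveI : Infinite ↥S := hw₀
  set e := Nat.orderEmbeddingOfSet S with he
  have heS : ∀ k, e k ∈ S := by
    intro k
    have : e k ∈ Set.range e := ⟨k, rfl⟩
    rwa [Nat.orderEmbeddingOfSet_range S] at this
  have hbd2 : ∀ k, xs (e k) ∈ closedBall (0:V) M := by
    intro k
    rw [mem_closedBall_zero_iff]
    exact hbd (e k)
  obtain ⟨xl, _, φ', hφ'mono, hconv⟩ :=
    tendsto_subseq_of_bounded (isBounded_closedBall (x := (0:V)) (r := M)) hbd2
  refine ⟨(w₀ : V ≃ₗᵢ[ℝ] V), w₀.2, xl, fun k => e (φ' k),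
    (Nat.orderEmbeddingOfSet S).strictMono.comp hφ'mono, fun k => ?_, hconv⟩
  have := heS (φ' k)
  rw [hS] at this
  have h2 : f (e (φ' k)) = w₀ := this
  have h3 := congrArg Subtype.val h2
  exact h3

theorem solv (hWfin : (W : Set (V ≃ₗᵢ[ℝ] V)).Finite) (hreg : RegPt W x₀)
    (hdisj0 : Disj0 W x₀) {p : V} (hp : p ∈ Cp W x₀ 0) {u' : V} (hu'L : u' ∈ Lsp W x₀ p)
    {c : ℝ} (hc : 0 < c)
    (hpos : ∀ y, y ∈ Cp W x₀ p → y ∈ Lsp W x₀ p → c * ‖y‖ ≤ ⟪u', y⟫) :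
    ∃ x, x ∈ Cp W x₀ p ∧ x ∈ Lsp W x₀ p ∧ ∃ w ∈ Hs W p, w x = x - u' := by
  classical
  set K : Set V := Cp W x₀ p ∩ (Lsp W x₀ p : Set V) with hK
  have hKclosed : IsClosed K :=
    (Cp_closed p).inter (Submodule.closed_of_finiteDimensional _)
  have h0K : (0:V) ∈ K := by
    constructor
    · intro g hg; rw [inner_zero_left]
    · exact Submodule.zero_mem _
  have hrepK : ∀ z ∈ K, rep W x₀ p (z - u') ∈ K := by
    intro z hz
    obtain ⟨hr1, hr2⟩ := repw_spec hWfin hreg p (z - u')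
    refine ⟨hr2, ?_⟩
    have hzu : z - u' ∈ Lsp W x₀ p := Submodule.sub_mem _ hz.2 hu'L
    exact ((map_L_iff hreg hr1) (z - u')).2 hzu
  have step : ∀ θ : ℝ, 0 < θ → θ < 1 → ∃ x ∈ K, x = θ • rep W x₀ p (x - u') := by
    intro θ hθ0 hθ1
    haveI : CompleteSpace ↥K := hKclosed.completeSpace_coe
    haveI : Nonempty ↥K := ⟨⟨0, h0K⟩⟩
    set F : ↥K → ↥K := fun z => ⟨θ • rep W x₀ p ((z : V) - u'), by
      have hmem := hrepK z z.2
      constructor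
      · intro g hg
        rw [real_inner_smul_left]
        exact mul_nonneg hθ0.le (hmem.1 g hg)
      · exact Submodule.smul_mem _ _ hmem.2⟩ with hF
    have hcontr : ContractingWith ⟨θ, hθ0.le⟩ F := by
      constructor
      · exact_mod_cast hθ1
      · refine LipschitzWith.of_dist_le_mul (fun a b => ?_)
        rw [Subtype.dist_eq, dist_eq_norm, Subtype.dist_eq a b, dist_eq_norm]
        have h1 : (F a : V) - (F b : V) =
            θ • (rep W x₀ p ((a:V) - u') - rep W x₀ p ((b:V) - u')) := by
          rw [hF]; simp [smul_sub]
        rw [h1, norm_smul]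
        have h2 := rep_nonexpansive hWfin hreg hdisj0 hp ((a:V) - u') ((b:V) - u')
        have h3 : (a:V) - u' - ((b:V) - u') = (a:V) - (b:V) := by abel
        rw [h3] at h2
        have h4 : |θ| = θ := abs_of_pos hθ0
        simp only [Real.norm_eq_abs, h4]
        exact mul_le_mul_of_nonneg_left h2 hθ0.le
    obtain ⟨y, hy, _⟩ := hcontr.exists_fixedPoint ⟨0, h0K⟩ (edist_ne_top _ _)
    refine ⟨(y : V), y.2, ?_⟩
    have := congrArg (Subtype.val) hy
    exact this.symm
  set θf : ℕ → ℝ := fun n => 1 - 1/((n:ℝ)+2) with hθf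
  have hθ0 : ∀ n, 0 < θf n := by
    intro n
    have h1 : 1/((n:ℝ)+2) < 1 := by
      rw [div_lt_one (by positivity)]
      have : (0:ℝ) ≤ (n:ℝ) := Nat.cast_nonneg n
      linarith
    simp only [hθf]
    linarith
  have hθ1 : ∀ n, θf n < 1 := by
    intro n
    have h1 : 0 < 1/((n:ℝ)+2) := by positivity
    simp only [hθf]
    linarith
  have hθt : Tendsto θf atTop (𝓝 1) := by
    have h1 : Tendsto (fun n : ℕ => 1/((n:ℝ)+2)) atTop (𝓝 0) := by
      have h2 : Tendsto (fun n : ℕ => ((n:ℝ)+2)) atTop atTop :=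
        tendsto_atTop_add_const_right _ 2 tendsto_natCast_atTop_atTop
      have h3 := h2.inv_tendsto_atTop
      simp only [one_div]; exact h3
    have h2 : Tendsto (fun n : ℕ => (1:ℝ) - 1/((n:ℝ)+2)) atTop (𝓝 (1 - 0)) :=
      Tendsto.sub tendsto_const_nhds h1
    rw [hθf]
    simpa [one_div] using h2
  have hxs := fun n => step (θf n) (hθ0 n) (hθ1 n)
  choose xs hxsK hxseq using hxs
  set M := ‖u'‖^2/(2*c) with hM
  have hbd : ∀ n, ‖xs n‖ ≤ M := by
    intro n
    have heq := hxseq n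
    have hnorm : ‖xs n‖ = θf n * ‖xs n - u'‖ := by
      conv_lhs => rw [heq]
      rw [norm_smul, Real.norm_eq_abs, abs_of_pos (hθ0 n), norm_rep hWfin hreg]
    have hB : ‖xs n - u'‖^2 = ‖xs n‖^2 - 2*⟪xs n, u'⟫ + ‖u'‖^2 := norm_sub_sq_real _ _
    have hBnn : (0:ℝ) ≤ ‖xs n - u'‖^2 := sq_nonneg _
    have hsq : ‖xs n‖^2 = (θf n)^2 * ‖xs n - u'‖^2 := by
      rw [hnorm]; ring
    have hθsq : (θf n)^2 ≤ 1 := by nlinarith [hθ0 n, hθ1 n]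
    have h6 : ‖xs n‖^2 ≤ ‖xs n - u'‖^2 := by
      nlinarith [mul_nonneg (sub_nonneg.2 hθsq) hBnn]
    have hkey : 2*⟪xs n, u'⟫ ≤ ‖u'‖^2 := by linarith
    have hposn := hpos (xs n) (hxsK n).1 (hxsK n).2
    have hcomm : ⟪u', xs n⟫ = ⟪xs n, u'⟫ := real_inner_comm _ _
    rw [hM]
    rw [div_eq_inv_mul]
    have h5 : c * ‖xs n‖ ≤ ‖u'‖^2/2 := by
      rw [hcomm] at hposn
      linarith
    calc ‖xs n‖ = c⁻¹ * (c * ‖xs n‖) := by field_simp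
      _ ≤ c⁻¹ * (‖u'‖^2/2) := by
          apply mul_le_mul_of_nonneg_left h5 (by positivity)
      _ = (2*c)⁻¹ * ‖u'‖^2 := by rw [mul_inv]; ring
  set ws : ℕ → V ≃ₗᵢ[ℝ] V := fun n => repw W x₀ p (xs n - u') with hws
  have hwsmem : ∀ n, ws n ∈ Hs W p := fun n => (repw_spec hWfin hreg p (xs n - u')).1
  obtain ⟨w, hwmem, xl, φ, hφmono, hφw, hφconv⟩ := subseq_const_w hWfin ws hwsmem xs hbd
  have heqφ : ∀ k, xs (φ k) = θf (φ k) • (w ((xs (φ k)) - u')) := by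
    intro k
    have h1 := hxseq (φ k)
    have h2 : rep W x₀ p (xs (φ k) - u') = ws (φ k) (xs (φ k) - u') := rfl
    rw [h2, hφw k] at h1
    exact h1
  have hθφ : Tendsto (fun k => θf (φ k)) atTop (𝓝 1) := hθt.comp hφmono.tendsto_atTop
  have hrhs : Tendsto (fun k => θf (φ k) • (w ((xs (φ k)) - u'))) atTop
      (𝓝 ((1:ℝ) • (w (xl - u')))) := by
    refine Tendsto.smul hθφ ?_
    have h1 : Tendsto (fun k => xs (φ k) - u') atTop (𝓝 (xl - u')) :=
      hφconv.sub tendsto_const_nhds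
    exact ((w.continuous.tendsto _).comp h1)
  have hlim : xl = (1:ℝ) • (w (xl - u')) := by
    refine tendsto_nhds_unique hφconv ?_
    have := hrhs.congr (fun k => (heqφ k).symm)
    exact this
  rw [one_smul] at hlim
  have hxlK : xl ∈ K := by
    refine hKclosed.mem_of_tendsto hφconv (Filter.Eventually.of_forall (fun k => hxsK (φ k)))
  refine ⟨xl, hxlK.1, hxlK.2, w⁻¹, (Hs W p).inv_mem hwmem, ?_⟩
  conv_lhs => rw [hlim]
  exact w.symm_apply_apply (xl - u')

end Solutions

section Existence

open Filter Topology Bornology Metric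

variable [FiniteDimensional ℝ V] {W : Subgroup (V ≃ₗᵢ[ℝ] V)} {x₀ : V}

theorem dual_mem_L (hreg : RegPt W x₀) {p u : V}
    (hdual : ∀ y ∈ Cp W x₀ p, 0 ≤ ⟪u, y⟫) : u ∈ Lsp W x₀ p := by
  obtain ⟨uL, huL, uN, huN, hsum⟩ := (Lsp W x₀ p).exists_add_mem_mem_orthogonal u
  have hNCp : ∀ (s : ℝ), s • uN ∈ Cp W x₀ p := by
    intro s g hg
    have h1 : ⟪rbeta x₀ g, uN⟫ = 0 := by
      rw [Submodule.mem_orthogonal] at huN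
      exact huN _ (beta_mem_L hg)
    rw [real_inner_smul_left, real_inner_comm, h1, mul_zero]
  have h1 := hdual (uN) (by simpa using hNCp 1)
  have h2 := hdual (-uN) (by simpa using hNCp (-1))
  have h3 : ⟪u, uN⟫ = 0 := by
    rw [inner_neg_right] at h2
    linarith
  have h4 : ⟪uL, uN⟫ = 0 := by
    rw [Submodule.mem_orthogonal] at huN
    exact huN uL huL
  have h5 : ⟪uN, uN⟫ = 0 := by
    rw [hsum, inner_add_left] at h3
    linarith
  have h6 : uN = 0 := inner_self_eq_zero.1 h5
  rw [hsum, h6, add_zero]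
  exact huL

theorem epsA (hWfin : (W : Set (V ≃ₗᵢ[ℝ] V)).Finite) (hreg : RegPt W x₀)
    {p d : V} (hp : p ∈ Cp W x₀ 0) (hd : d ∈ Cp W x₀ p) :
    ∀ᶠ ε in 𝓝[>] (0:ℝ), (p + ε • d ∈ Cp W x₀ 0) ∧
      (RS W (p + ε • d) = {g | g ∈ RS W p ∧ g d = d}) := by
  have hfin := RS_finite hWfin (0 : V)
  have hall : ∀ g ∈ RS W (0:V), ∀ᶠ ε in 𝓝[>] (0:ℝ),
      (0 ≤ ⟪p + ε • d, rbeta x₀ g⟫) ∧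
      (⟪p + ε • d, rbeta x₀ g⟫ = 0 ↔ (⟪p, rbeta x₀ g⟫ = 0 ∧ ⟪d, rbeta x₀ g⟫ = 0)) := by
    intro g hg
    have h1 : (0:ℝ) ≤ ⟪p, rbeta x₀ g⟫ := hp g hg
    rcases h1.eq_or_lt with h2 | h2
    · have hgp : g ∈ RS W p := ⟨hg.1, hg.2.1, (beta_fix_iff hreg hg p).2 h2.symm⟩
      have h3 : 0 ≤ ⟪d, rbeta x₀ g⟫ := hd g hgp
      refine eventually_mem_nhdsWithin.mono (fun ε hε => ?_)
      have hε' : (0:ℝ) < ε := hε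
      rw [inner_add_left, real_inner_smul_left, ← h2]
      constructor
      · nlinarith
      · constructor
        · intro h4
          refine ⟨rfl, ?_⟩
          nlinarith
        · intro ⟨_, h4⟩
          rw [h4]
          ring
    · have hcont : Continuous fun ε : ℝ => ⟪p + ε • d, rbeta x₀ g⟫ :=
        Continuous.inner (continuous_const.add (continuous_id.smul continuous_const))
          continuous_const
      have ht : Tendsto (fun ε : ℝ => ⟪p + ε • d, rbeta x₀ g⟫) (𝓝[>] (0:ℝ))
          (𝓝 ⟪p + (0:ℝ) • d, rbeta x₀ g⟫) :=
        (hcont.tendsto 0).mono_left nhdsWithin_le_nhds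
      have h0 : ⟪p + (0:ℝ) • d, rbeta x₀ g⟫ = ⟪p, rbeta x₀ g⟫ := by simp
      rw [h0] at ht
      refine (ht.eventually (lt_mem_nhds h2)).mono (fun ε hε => ?_)
      refine ⟨hε.le, ?_⟩
      constructor
      · intro h4; rw [h4] at hε; exact absurd hε (lt_irrefl 0)
      · intro ⟨h4, _⟩; rw [h4] at h2; exact absurd h2 (lt_irrefl 0)
  refine ((eventually_all_finite hfin).2 hall).mono (fun ε hε => ?_)
  constructor
  · intro g hg
    exact (hε g hg).1
  · ext g
    simp only [Set.mem_setOf_eq]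
    constructor
    · intro hgm
      have hg0 : g ∈ RS W (0:V) := ⟨hgm.1, hgm.2.1, map_zero g⟩
      have h5 := (hε g hg0).2
      have h6 : ⟪p + ε • d, rbeta x₀ g⟫ = 0 := (beta_fix_iff hreg hg0 _).1 hgm.2.2
      obtain ⟨h7, h8⟩ := h5.1 h6
      exact ⟨⟨hgm.1, hgm.2.1, (beta_fix_iff hreg hg0 p).2 h7⟩, (beta_fix_iff hreg hg0 d).2 h8⟩
    · intro ⟨hgp, hgd⟩
      have hg0 : g ∈ RS W (0:V) := ⟨hgp.1, hgp.2.1, map_zero g⟩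
      have h7 : ⟪p, rbeta x₀ g⟫ = 0 := (beta_fix_iff hreg hg0 p).1 hgp.2.2
      have h8 : ⟪d, rbeta x₀ g⟫ = 0 := (beta_fix_iff hreg hg0 d).1 hgd
      have h6 : ⟪p + ε • d, rbeta x₀ g⟫ = 0 := by
        rw [inner_add_left, real_inner_smul_left, h7, h8]
        ring
      exact ⟨hgp.1, hgp.2.1, (beta_fix_iff hreg hg0 _).2 h6⟩

theorem existence (hWfin : (W : Set (V ≃ₗᵢ[ℝ] V)).Finite) (hreg : RegPt W x₀)
    (hdisj0 : Disj0 W x₀) :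
    ∀ n : ℕ, ∀ p : V, p ∈ Cp W x₀ 0 → (RS W p).ncard ≤ n →
      ∀ u : V, (∀ y ∈ Cp W x₀ p, 0 ≤ ⟪u, y⟫) →
      ∃ w ∈ Hs W p, ∃ x ∈ Up W x₀ p, u = x - w x := by
  intro n
  induction n with
  | zero =>
      intro p hp hcard u hdual
      have hRS : RS W p = ∅ := by
        have := Set.ncard_eq_zero (RS_finite hWfin p)
        exact this.1 (Nat.le_zero.1 hcard)
      have hu0 : u = 0 := by
        have h1 := hdual (-u) (by intro g hg; rw [hRS] at hg; exact absurd hg (Set.notMem_empty g))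
        rw [inner_neg_right] at h1
        have h2 : ⟪u, u⟫ = 0 := le_antisymm (by linarith) real_inner_self_nonneg
        exact inner_self_eq_zero.1 h2
      refine ⟨1, (Hs W p).one_mem, x₀, x₀_mem_Up hreg p, ?_⟩
      have h3 : (1 : V ≃ₗᵢ[ℝ] V) x₀ = x₀ := rfl
      rw [hu0, h3, sub_self]
  | succ n IH =>
      intro p hp hcard u hdual
      by_cases hu0 : u = 0
      · refine ⟨1, (Hs W p).one_mem, x₀, x₀_mem_Up hreg p, ?_⟩
        have h3 : (1 : V ≃ₗᵢ[ℝ] V) x₀ = x₀ := rfl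
        rw [hu0, h3, sub_self]
      by_cases hRSe : RS W p = ∅
      · exfalso
        apply hu0
        have h1 := hdual (-u) (by intro g hg; rw [hRSe] at hg; exact absurd hg (Set.notMem_empty g))
        rw [inner_neg_right] at h1
        have h2 : ⟪u, u⟫ = 0 := le_antisymm (by linarith) real_inner_self_nonneg
        exact inner_self_eq_zero.1 h2
      have huL : u ∈ Lsp W x₀ p := dual_mem_L hreg hdual
      by_cases hA : ∃ d, d ∈ Cp W x₀ p ∧ (∃ g ∈ RS W p, ⟪d, rbeta x₀ g⟫ ≠ 0) ∧ ⟪u, d⟫ = 0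
      -- Case A : recurse to a smaller reflection subgroup
      · obtain ⟨d, hdC, ⟨g₁, hg₁, hg₁d⟩, hud⟩ := hA
        obtain ⟨ε, hεCp, hεRS⟩ := (epsA hWfin hreg hp hdC).exists
        set p' := p + ε • d with hp'
        have hsub : RS W p' ⊆ RS W p := by
          rw [hεRS]; exact fun g hg => hg.1
        have hg₁n : g₁ ∉ RS W p' := by
          rw [hεRS]
          intro hmem
          exact hg₁d ((beta_fix_iff hreg ⟨hg₁.1, hg₁.2.1, map_zero g₁⟩ d).1 hmem.2)
        have hcard' : (RS W p').ncard ≤ n := by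
          have hlt : (RS W p').ncard < (RS W p).ncard :=
            Set.ncard_lt_ncard ⟨hsub, fun hcon => hg₁n (hcon hg₁)⟩ (RS_finite hWfin p)
          omega
        have hdual' : ∀ y ∈ Cp W x₀ p', 0 ≤ ⟪u, y⟫ := by
          intro y hy
          have hev : ∀ᶠ t in (atTop : Filter ℝ), y + t • d ∈ Cp W x₀ p := by
            have hallg : ∀ g ∈ RS W p, ∀ᶠ t in (atTop : Filter ℝ),
                0 ≤ ⟪y + t • d, rbeta x₀ g⟫ := by
              intro g hg
              by_cases hgd : g ∈ RS W p'
              · refine Filter.Eventually.of_forall (fun t => ?_)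
                have h1 : ⟪d, rbeta x₀ g⟫ = 0 := by
                  rw [hεRS] at hgd
                  exact (beta_fix_iff hreg hg d).1 hgd.2
                rw [inner_add_left, real_inner_smul_left, h1, mul_zero, add_zero]
                exact hy g hgd
              · have h2 : 0 < ⟪d, rbeta x₀ g⟫ := by
                  rcases (hdC g hg).eq_or_lt with h3 | h3
                  · exfalso
                    apply hgd
                    rw [hεRS]
                    exact ⟨hg, (beta_fix_iff hreg hg d).2 h3.symm⟩
                  · exact h3
                refine (eventually_ge_atTop ((-⟪y, rbeta x₀ g⟫)/⟪d, rbeta x₀ g⟫)).mono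
                  (fun t ht => ?_)
                rw [inner_add_left, real_inner_smul_left]
                rw [div_le_iff₀ h2] at ht
                nlinarith
            exact ((eventually_all_finite (RS_finite hWfin p)).2 hallg).mono
              (fun t htt g hg => htt g hg)
          obtain ⟨t, ht⟩ := hev.exists
          have h4 := hdual (y + t • d) ht
          rw [inner_add_right, real_inner_smul_right, hud, mul_zero, add_zero] at h4
          exact h4
        obtain ⟨w, hwmem', x', hx'Up, hueq⟩ := IH p' hεCp hcard' u hdual'
        have hwd : w d = d := by
          refine fix_of_closure (fun g hg => ?_) hwmem'
          rw [hεRS] at hg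
          exact hg.2
        have hwmem : w ∈ Hs W p := by
          have := Subgroup.closure_mono hsub
          exact this hwmem'
        have hxev : ∀ᶠ t in (atTop : Filter ℝ), x' + t • d ∈ Up W x₀ p := by
          have hallg : ∀ g ∈ RS W p, ∀ᶠ t in (atTop : Filter ℝ),
              0 < ⟪x' + t • d, rbeta x₀ g⟫ := by
            intro g hg
            by_cases hgd : g ∈ RS W p'
            · refine Filter.Eventually.of_forall (fun t => ?_)
              have h1 : ⟪d, rbeta x₀ g⟫ = 0 := by
                rw [hεRS] at hgd
                exact (beta_fix_iff hreg hg d).1 hgd.2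
              rw [inner_add_left, real_inner_smul_left, h1, mul_zero, add_zero]
              exact hx'Up g hgd
            · have h2 : 0 < ⟪d, rbeta x₀ g⟫ := by
                rcases (hdC g hg).eq_or_lt with h3 | h3
                · exfalso
                  apply hgd
                  rw [hεRS]
                  exact ⟨hg, (beta_fix_iff hreg hg d).2 h3.symm⟩
                · exact h3
              refine (eventually_gt_atTop ((-⟪x', rbeta x₀ g⟫)/⟪d, rbeta x₀ g⟫)).mono
                (fun t ht => ?_)
              rw [inner_add_left, real_inner_smul_left]
              rw [div_lt_iff₀ h2] at ht
              nlinarith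
          exact ((eventually_all_finite (RS_finite hWfin p)).2 hallg).mono
            (fun t htt g hg => htt g hg)
        obtain ⟨t, ht⟩ := hxev.exists
        refine ⟨w, hwmem, x' + t • d, ht, ?_⟩
        rw [map_add, map_smul, hwd, hueq]
        abel
      -- Case B : fixed point argument
      · push_neg at hA
        obtain ⟨g₂, hg₂⟩ := Set.nonempty_iff_ne_empty.2 hRSe
        set Scpt : Set V := {y | y ∈ Cp W x₀ p ∧ y ∈ Lsp W x₀ p ∧ ‖y‖ = 1} with hScpt
        have hScl : IsClosed Scpt := by
          have hseq : Scpt = (Cp W x₀ p ∩ (Lsp W x₀ p : Set V)) ∩ sphere 0 1 := by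
            ext y
            simp only [hScpt, Set.mem_setOf_eq, Set.mem_inter_iff, mem_sphere_zero_iff_norm,
              SetLike.mem_coe]
            tauto
          rw [hseq]
          exact ((Cp_closed p).inter (Submodule.closed_of_finiteDimensional _)).inter
            isClosed_sphere
        have hScompact : IsCompact Scpt := by
          refine (isCompact_closedBall (0:V) 1).of_isClosed_subset hScl ?_
          intro y hy
          rw [mem_closedBall_zero_iff, hy.2.2]
        have hSne : Scpt.Nonempty := by
          set q := (Submodule.orthogonalProjectionOnto (Lsp W x₀ p) x₀ : V) with hq
          have hqid : ∀ g ∈ RS W p, ⟪q, rbeta x₀ g⟫ = ⟪x₀, rbeta x₀ g⟫ := by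
            intro g hg
            have h1 : x₀ - q ∈ (Lsp W x₀ p)ᗮ := Submodule.sub_starProjection_mem_orthogonal (K := Lsp W x₀ p) x₀
            rw [Submodule.mem_orthogonal] at h1
            have h2 := h1 _ (beta_mem_L hg)
            have h3 : ⟪x₀ - q, rbeta x₀ g⟫ = 0 := by rw [real_inner_comm]; exact h2
            rw [inner_sub_left] at h3
            linarith
          have hqne : q ≠ 0 := by
            intro h0
            have h4 := hqid g₂ hg₂
            rw [h0, inner_zero_left] at h4
            have h5 := beta_pos₀ hreg hg₂
            rw [← h4] at h5
            exact lt_irrefl 0 h5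
          refine ⟨‖q‖⁻¹ • q, ?_, ?_, ?_⟩
          · intro g hg
            rw [real_inner_smul_left, hqid g hg]
            have := beta_pos₀ hreg hg
            positivity
          · exact Submodule.smul_mem _ _ (Submodule.orthogonalProjectionOnto (Lsp W x₀ p) x₀).2
          · rw [norm_smul, norm_inv, norm_norm]
            exact inv_mul_cancel₀ (norm_ne_zero_iff.2 hqne)
        have hcont : Continuous fun y : V => ⟪u, y⟫ :=
          Continuous.inner continuous_const continuous_id
        obtain ⟨y₁, hy₁S, hy₁min⟩ := hScompact.exists_isMinOn hSne hcont.continuousOn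
        set c := ⟪u, y₁⟫ with hcdef
        have hcpos : 0 < c := by
          have h1 : ∃ g ∈ RS W p, ⟪y₁, rbeta x₀ g⟫ ≠ 0 := by
            by_contra hno
            push_neg at hno
            have h2 : Lsp W x₀ p ≤ (ℝ ∙ y₁)ᗮ := by
              rw [Lsp, Submodule.span_le]
              rintro - ⟨g, hg, rfl⟩
              rw [SetLike.mem_coe, Submodule.mem_orthogonal_singleton_iff_inner_right]
              exact hno g hg
            have h3 := h2 hy₁S.2.1
            rw [Submodule.mem_orthogonal_singleton_iff_inner_right] at h3
            have h4 : y₁ = 0 := inner_self_eq_zero.1 h3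
            have h5 := hy₁S.2.2
            rw [h4, norm_zero] at h5
            norm_num at h5
          have h6 := hA y₁ hy₁S.1 h1
          have h7 := hdual y₁ hy₁S.1
          exact lt_of_le_of_ne h7 (Ne.symm h6)
        have hpos : ∀ y, y ∈ Cp W x₀ p → y ∈ Lsp W x₀ p → c * ‖y‖ ≤ ⟪u, y⟫ := by
          intro y hyC hyL
          by_cases hy0 : y = 0
          · rw [hy0]; simp
          · have hy1 : ‖y‖⁻¹ • y ∈ Scpt := by
              refine ⟨?_, Submodule.smul_mem _ _ hyL, ?_⟩
              · intro g hg
                rw [real_inner_smul_left]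
                have := hyC g hg
                positivity
              · rw [norm_smul, norm_inv, norm_norm]
                exact inv_mul_cancel₀ (norm_ne_zero_iff.2 hy0)
            have h8 := (isMinOn_iff.1 hy₁min) _ hy1
            rw [real_inner_smul_right] at h8
            have hny : 0 < ‖y‖ := norm_pos_iff.2 hy0
            calc c * ‖y‖ ≤ (‖y‖⁻¹ * ⟪u, y⟫) * ‖y‖ := by nlinarith
              _ = ⟪u, y⟫ := by field_simp
        obtain ⟨xh, hxhC, hxhL, wh, hwhmem, hwheq⟩ := solv hWfin hreg hdisj0 hp huL hcpos hpos
        by_cases hgood : ∃ x ∈ Up W x₀ p, ∃ w ∈ Hs W p, w x = x - u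
        · obtain ⟨x, hxU, w, hwmem, hweq⟩ := hgood
          refine ⟨w, hwmem, x, hxU, ?_⟩
          rw [hweq]
          abel
        · exfalso
          push_neg at hgood
          set Sol : Set V := {x | (x ∈ Cp W x₀ p ∧ x ∈ Lsp W x₀ p) ∧
            ∃ w ∈ Hs W p, w x = x - u} with hSolDef
          set wallf : V → Set (V ≃ₗᵢ[ℝ] V) :=
            fun x => {g | g ∈ RS W p ∧ ⟪x, rbeta x₀ g⟫ = 0} with hwallf
          have hwallfin : ∀ x, (wallf x).Finite :=
            fun x => (RS_finite hWfin p).subset (fun g hg => hg.1)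
          set A : Set ℕ := {k | ∃ x ∈ Sol, (wallf x).ncard = k} with hAdef
          have hAne : A.Nonempty := ⟨(wallf xh).ncard, xh, ⟨⟨hxhC, hxhL⟩, wh, hwhmem, hwheq⟩, rfl⟩
          obtain ⟨k₀, hk₀A, hk₀min⟩ :=
            (wellFounded_lt : WellFounded ((· < ·) : ℕ → ℕ → Prop)).has_min A hAne
          obtain ⟨xm, hxmSol, hxmcard⟩ := hk₀A
          obtain ⟨wm, hwmmem, hwmeq⟩ := hxmSol.2
          have hxmnotUp : xm ∉ Up W x₀ p := fun hcon => hgood xm hcon wm hwmmem hwmeq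
          have hg₀ex : ∃ g₀ ∈ RS W p, ⟪xm, rbeta x₀ g₀⟫ = 0 := by
            by_contra hno
            push_neg at hno
            exact hxmnotUp (fun g hg => lt_of_le_of_ne (hxmSol.1.1 g hg) (Ne.symm (hno g hg)))
          obtain ⟨g₀, hg₀mem, hg₀wall⟩ := hg₀ex
          set β₀ := rbeta x₀ g₀ with hβ₀def
          have hcw : ∀ x ∈ Sol, ⟪x, β₀⟫ = 0 := by
            intro x hxSol
            obtain ⟨w', hw'mem, hw'eq⟩ := hxSol.2
            obtain ⟨v, hvmem, hveq⟩ :=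
              midsol hWfin hreg hdisj0 hp hxmSol.1.1 hxSol.1.1 hwmmem hwmeq hw'mem hw'eq
            set m := (2⁻¹:ℝ) • (xm + x) with hmdef
            have hmSol : m ∈ Sol := by
              refine ⟨⟨?_, ?_⟩, v, hvmem, hveq⟩
              · intro g hg
                rw [hmdef, real_inner_smul_left, inner_add_left]
                have h1 := hxmSol.1.1 g hg
                have h2 := hxSol.1.1 g hg
                nlinarith
              · rw [hmdef]
                exact Submodule.smul_mem _ _ (Submodule.add_mem _ hxmSol.1.2 hxSol.1.2)
            have hwsub : wallf m ⊆ wallf xm := by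
              intro g hg
              refine ⟨hg.1, ?_⟩
              have h9 := hg.2
              rw [hmdef, real_inner_smul_left, inner_add_left] at h9
              have ha := hxmSol.1.1 g hg.1
              have hb := hxSol.1.1 g hg.1
              linarith
            have hle : (wallf xm).ncard ≤ (wallf m).ncard := by
              have hmA : (wallf m).ncard ∈ A := ⟨m, hmSol, rfl⟩
              have := hk₀min _ hmA
              omega
            have heqw : wallf m = wallf xm :=
              Set.eq_of_subset_of_ncard_le hwsub (by omega) (hwallfin xm)
            have hg₀m : g₀ ∈ wallf m := by
              rw [heqw]
              exact ⟨hg₀mem, hg₀wall⟩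
            have h9 := hg₀m.2
            rw [hmdef, real_inner_smul_left, inner_add_left] at h9
            rw [hβ₀def] at hg₀wall ⊢
            linarith
          have hβ₀ne : β₀ ≠ 0 := beta_ne hreg hg₀mem
          have hβ₀L : β₀ ∈ Lsp W x₀ p := beta_mem_L hg₀mem
          set ε' := min 1 (c/(2*(‖β₀‖+1))) with hε'def
          have hε'pos : 0 < ε' := by
            apply lt_min one_pos
            positivity
          have hε'le1 : ε' ≤ 1 := min_le_left _ _
          set εs : ℕ → ℝ := fun k => ε'/((k:ℝ)+1) with hεsdef
          have hεspos : ∀ k, 0 < εs k := fun k => div_pos hε'pos (by positivity)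
          have hεsle : ∀ k, εs k ≤ ε' := by
            intro k
            rw [hεsdef]
            rw [div_le_iff₀ (by positivity : (0:ℝ) < (k:ℝ)+1)]
            nlinarith [hε'pos, Nat.cast_nonneg (α := ℝ) k]
          set us : ℕ → V := fun k => u - εs k • β₀ with husdef
          have husL : ∀ k, us k ∈ Lsp W x₀ p :=
            fun k => Submodule.sub_mem _ huL (Submodule.smul_mem _ _ hβ₀L)
          have hD : (c/(2*(‖β₀‖+1))) * (2*(‖β₀‖+1)) = c := by
            field_simp
          have huspos : ∀ k, ∀ y, y ∈ Cp W x₀ p → y ∈ Lsp W x₀ p →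
              (c/2) * ‖y‖ ≤ ⟪us k, y⟫ := by
            intro k y hyC hyL
            have h10 := hpos y hyC hyL
            have h11 : |⟪β₀, y⟫| ≤ ‖β₀‖ * ‖y‖ := abs_real_inner_le_norm β₀ y
            have h12 : εs k ≤ c/(2*(‖β₀‖+1)) := le_trans (hεsle k) (min_le_right _ _)
            have h13 : (0:ℝ) ≤ ‖y‖ := norm_nonneg y
            have h14 : (0:ℝ) ≤ ‖β₀‖ := norm_nonneg β₀
            have hDpos : 0 < c/(2*(‖β₀‖+1)) := by positivity
            have h15 : εs k * ⟪β₀, y⟫ ≤ (c/2) * ‖y‖ := by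
              have hup : εs k * ⟪β₀, y⟫ ≤ (c/(2*(‖β₀‖+1))) * (‖β₀‖ * ‖y‖) := by
                rcases le_or_gt (⟪β₀, y⟫) 0 with hneg | hpos2
                · have := mul_nonpos_of_nonneg_of_nonpos (hεspos k).le hneg
                  nlinarith [mul_nonneg (mul_nonneg hDpos.le h14) h13]
                · have h16 : ⟪β₀, y⟫ ≤ ‖β₀‖ * ‖y‖ := le_trans (le_abs_self _) h11
                  nlinarith [hεspos k]
              have hfin2 : (c/(2*(‖β₀‖+1))) * (‖β₀‖ * ‖y‖) ≤ (c/2) * ‖y‖ := by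
                nlinarith [mul_nonneg (mul_nonneg hDpos.le h14) h13,
                  mul_nonneg hDpos.le h13, hD]
              linarith
            have h17 : ⟪us k, y⟫ = ⟪u, y⟫ - εs k * ⟪β₀, y⟫ := by
              rw [husdef]
              simp only
              rw [inner_sub_left, real_inner_smul_left]
            rw [h17]
            linarith
          have hsols : ∀ k, ∃ x, x ∈ Cp W x₀ p ∧ x ∈ Lsp W x₀ p ∧
              ∃ w ∈ Hs W p, w x = x - us k :=
            fun k => solv hWfin hreg hdisj0 hp (husL k) (by positivity) (huspos k)
          choose xs hxsC hxsL hsolw using hsols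
          choose ws hwsmem hwseq using hsolw
          have husbd : ∀ k, ‖us k‖ ≤ ‖u‖ + ‖β₀‖ := by
            intro k
            calc ‖us k‖ ≤ ‖u‖ + ‖εs k • β₀‖ := norm_sub_le u _
              _ = ‖u‖ + εs k * ‖β₀‖ := by
                  rw [norm_smul, Real.norm_eq_abs, abs_of_pos (hεspos k)]
              _ ≤ ‖u‖ + ‖β₀‖ := by
                  have h18 := hεsle k
                  have h19 := norm_nonneg β₀
                  nlinarith [hε'le1]
          have hbd : ∀ k, ‖xs k‖ ≤ (‖u‖ + ‖β₀‖)^2 / c := by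
            intro k
            have h16 := sol_inner (hwseq k)
            have h17 := huspos k (xs k) (hxsC k) (hxsL k)
            have h18 : ‖us k‖^2 ≤ (‖u‖ + ‖β₀‖)^2 := by
              nlinarith [husbd k, norm_nonneg (us k), norm_nonneg u, norm_nonneg β₀]
            rw [le_div_iff₀ hcpos]
            nlinarith [norm_nonneg (xs k)]
          obtain ⟨w, hwmem, xl, φ, hφmono, hφw, hφconv⟩ := subseq_const_w hWfin ws hwsmem xs hbd
          have hεconv : Tendsto εs atTop (𝓝 0) := by
            have h19a := tendsto_one_div_add_atTop_nhds_zero_nat (𝕜 := ℝ)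
            have h19b : Tendsto (fun k : ℕ => ε' * (1/((k:ℝ)+1))) atTop (𝓝 (ε' * 0)) :=
              tendsto_const_nhds.mul h19a
            rw [mul_zero] at h19b
            refine h19b.congr (fun k => ?_)
            rw [hεsdef, mul_one_div]
          have husconv : Tendsto (fun k => us (φ k)) atTop (𝓝 u) := by
            have h20 : Tendsto (fun k => εs (φ k)) atTop (𝓝 0) :=
              hεconv.comp hφmono.tendsto_atTop
            have h21 : Tendsto (fun k => εs (φ k) • β₀) atTop (𝓝 ((0:ℝ) • β₀)) :=
              h20.smul_const β₀
            rw [zero_smul] at h21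
            have h22 := Tendsto.sub (tendsto_const_nhds : Tendsto (fun _ : ℕ => u) atTop (𝓝 u)) h21
            rw [sub_zero] at h22
            exact h22
          have hweqlim : w xl = xl - u := by
            have hL : Tendsto (fun k => w (xs (φ k))) atTop (𝓝 (w xl)) :=
              (w.continuous.tendsto _).comp hφconv
            have hR : Tendsto (fun k => xs (φ k) - us (φ k)) atTop (𝓝 (xl - u)) :=
              hφconv.sub husconv
            have hEq : ∀ k, w (xs (φ k)) = xs (φ k) - us (φ k) := by
              intro k
              have h23 := hwseq (φ k)
              rw [hφw k] at h23
              exact h23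
            exact tendsto_nhds_unique (hL.congr hEq) hR
          have hxlC : xl ∈ Cp W x₀ p :=
            (Cp_closed p).mem_of_tendsto hφconv
              (Filter.Eventually.of_forall (fun k => hxsC (φ k)))
          have hxlL : xl ∈ Lsp W x₀ p := by
            have := (Submodule.closed_of_finiteDimensional
              (Lsp W x₀ p)).mem_of_tendsto hφconv
              (Filter.Eventually.of_forall (fun k => hxsL (φ k)))
            exact this
          have hxlwall : ⟪xl, β₀⟫ = 0 := hcw xl ⟨⟨hxlC, hxlL⟩, w, hwmem, hweqlim⟩
          set e := εs (φ 0) with hedef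
          have hepos : 0 < e := hεspos (φ 0)
          set ξ := xs (φ 0) - xl with hξdef
          have hξeq : ξ - w ξ = (-e) • β₀ := by
            have h23 : w ξ = (xs (φ 0) - us (φ 0)) - (xl - u) := by
              rw [hξdef, map_sub]
              have h24 : w (xs (φ 0)) = xs (φ 0) - us (φ 0) := by
                rw [← hφw 0]
                exact hwseq (φ 0)
              rw [h24, hweqlim]
            rw [h23, hξdef, husdef, hedef]
            simp only [neg_smul]
            abel
          have h24 := half_id w ξ
          rw [hξeq, real_inner_smul_right, norm_smul, Real.norm_eq_abs, abs_neg,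
            abs_of_pos hepos] at h24
          have hBpos : 0 < ‖β₀‖^2 := by
            have := norm_pos_iff.2 hβ₀ne
            positivity
          have hXneg : ⟪ξ, β₀⟫ < 0 := by
            nlinarith [h24, hepos, hBpos, mul_pos (mul_pos hepos hepos) hBpos]
          have h26 : ⟪xs (φ 0), β₀⟫ < 0 := by
            have h27 : ⟪xs (φ 0), β₀⟫ = ⟪xl, β₀⟫ + ⟪ξ, β₀⟫ := by
              rw [hξdef, inner_sub_left]
              ring
            rw [h27, hxlwall]
            linarith
          exact absurd (hxsC (φ 0) g₀ hg₀mem) (not_le.2 h26)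


end Existence

section Conversion

open Filter Topology Metric

variable [FiniteDimensional ℝ V] {W : Subgroup (V ≃ₗᵢ[ℝ] V)} {x₀ : V}

theorem RS_zero : RS W (0:V) = {g : V ≃ₗᵢ[ℝ] V | g ∈ W ∧ IsLinRefl g} := by
  ext g
  simp only [RS, Set.mem_setOf_eq, map_zero, and_true]

theorem reg_of_not_mem_mirrors (hx₀m : x₀ ∈ (mirrors W)ᶜ) : RegPt W x₀ := by
  intro g hgW hgr hfix
  apply hx₀m
  rw [mirrors]
  exact Set.mem_biUnion (⟨hgW, hgr⟩ : g ∈ {g : V ≃ₗᵢ[ℝ] V | g ∈ W ∧ IsLinRefl g}) hfix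

theorem U0_convex : Convex ℝ (Up W x₀ 0) := by
  intro a ha b hb s t hs ht hst
  intro g hg
  rw [inner_add_left, real_inner_smul_left, real_inner_smul_left]
  have h1 := ha g hg
  have h2 := hb g hg
  rcases eq_or_lt_of_le hs with hs0 | hs0
  · rw [← hs0] at hst ⊢
    simp only [zero_mul, zero_add] at hst ⊢
    rw [hst]
    linarith
  · nlinarith

theorem U0_subset_mirrorsc (hreg : RegPt W x₀) : Up W x₀ 0 ⊆ (mirrors W)ᶜ := by
  intro v hv
  intro hmem
  rw [mirrors] at hmem
  obtain ⟨g, hgS, hfix⟩ := Set.mem_iUnion₂.1 hmem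
  have hg0 : g ∈ RS W (0:V) := by rw [RS_zero]; exact hgS
  have h1 := (beta_fix_iff hreg hg0 v).1 hfix
  have h2 := hv g hg0
  rw [h1] at h2
  exact lt_irrefl 0 h2

theorem U_eq_U0 (hWfin : (W : Set (V ≃ₗᵢ[ℝ] V)).Finite) (hx₀m : x₀ ∈ (mirrors W)ᶜ) :
    connectedComponentIn (mirrors W)ᶜ x₀ = Up W x₀ 0 := by
  have hreg := reg_of_not_mem_mirrors hx₀m
  apply Set.Subset.antisymm
  · intro v hv
    intro g hg
    set f : V → ℝ := fun y => ⟪y, rbeta x₀ g⟫ with hf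
    have hcont : Continuous f := Continuous.inner continuous_id continuous_const
    set S : Set ℝ := f '' (connectedComponentIn (mirrors W)ᶜ x₀) with hS
    have hSpre : IsPreconnected S :=
      (isPreconnected_connectedComponentIn).image f hcont.continuousOn
    have h0S : (0:ℝ) ∉ S := by
      rintro ⟨y, hy, hy0⟩
      have hymem : y ∈ (mirrors W)ᶜ := connectedComponentIn_subset _ _ hy
      apply hymem
      rw [mirrors]
      refine Set.mem_biUnion (?_ : g ∈ {g : V ≃ₗᵢ[ℝ] V | g ∈ W ∧ IsLinRefl g}) ?_
      · exact ⟨hg.1, hg.2.1⟩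
      · exact (beta_fix_iff hreg hg y).2 hy0
    have hx₀S : f x₀ ∈ S := ⟨x₀, mem_connectedComponentIn hx₀m, rfl⟩
    have hvS : f v ∈ S := ⟨v, hv, rfl⟩
    by_contra hle
    push_neg at hle
    have h0 : (0:ℝ) ∈ Set.Icc (f v) (f x₀) := ⟨hle, (beta_pos₀ hreg hg).le⟩
    exact h0S (hSpre.Icc_subset hvS hx₀S h0)
  · intro v hv
    have hUconn : IsPreconnected (Up W x₀ 0) := (U0_convex).isPreconnected
    have := hUconn.subset_connectedComponentIn (x₀_mem_Up hreg 0)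
      (U0_subset_mirrorsc hreg)
    exact this hv

theorem closureU0_eq_Cp (hWfin : (W : Set (V ≃ₗᵢ[ℝ] V)).Finite) (hreg : RegPt W x₀) :
    closure (Up W x₀ 0) = Cp W x₀ 0 := by
  apply Set.Subset.antisymm
  · exact closure_minimal (Up_subset_Cp 0) (Cp_closed 0)
  · intro y hy
    have htend : Tendsto (fun n : ℕ => y + ((1:ℝ)/(n+1)) • x₀) atTop (𝓝 y) := by
      have h1 : Tendsto (fun n : ℕ => ((1:ℝ)/(n+1)) • x₀) atTop (𝓝 ((0:ℝ) • x₀)) :=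
        tendsto_one_div_add_atTop_nhds_zero_nat.smul_const x₀
      rw [zero_smul] at h1
      have h2 := Tendsto.add (tendsto_const_nhds : Tendsto (fun _ : ℕ => y) atTop (𝓝 y)) h1
      rw [add_zero] at h2
      exact h2
    refine mem_closure_of_tendsto htend (Filter.Eventually.of_forall (fun n => ?_))
    exact add_smul_x₀_mem_Up hreg hy (by positivity)

theorem interior_closure_U0 (hWfin : (W : Set (V ≃ₗᵢ[ℝ] V)).Finite) (hreg : RegPt W x₀) :
    interior (closure (Up W x₀ 0)) = Up W x₀ 0 := by
  apply Set.Subset.antisymm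
  · intro z hz
    obtain ⟨δ, hδ, hball⟩ := Metric.mem_nhds_iff.1 (mem_interior_iff_mem_nhds.1 hz)
    set μ := δ/(2*(‖z - x₀‖+1)) with hμ
    have hμpos : 0 < μ := by positivity
    set z' := z + μ • (z - x₀) with hz'
    have hz'mem : z' ∈ closure (Up W x₀ 0) := by
      apply hball
      rw [mem_ball, dist_eq_norm, hz']
      have h1 : z + μ • (z - x₀) - z = μ • (z - x₀) := by abel
      rw [h1, norm_smul, Real.norm_eq_abs, abs_of_pos hμpos]
      rw [hμ]
      have h2 : 0 ≤ ‖z - x₀‖ := norm_nonneg _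
      rw [div_mul_eq_mul_div, div_lt_iff₀ (by positivity)]
      nlinarith
    have hcombo := (U0_convex (W := W) (x₀ := x₀)).combo_interior_closure_mem_interior
      (x := x₀) (y := z') (a := μ/(1+μ)) (b := 1/(1+μ))
      (by rw [(Up_open hWfin 0).interior_eq]; exact x₀_mem_Up hreg 0)
      hz'mem (by positivity) (by positivity) (by field_simp; ring)
    have heqz : (μ/(1+μ)) • x₀ + (1/(1+μ)) • z' = z := by
      rw [hz']
      have hne : (1:ℝ) + μ ≠ 0 := by positivity
      match_scalars
      all_goals field_simp
      all_goals ring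
    rw [heqz, (Up_open hWfin 0).interior_eq] at hcombo
    exact hcombo
  · intro z hz
    exact interior_maximal (subset_closure) (Up_open hWfin 0) hz

end Conversion

section Cancel

variable [FiniteDimensional ℝ V]

theorem lin_cancel {v : V ≃ₗᵢ[ℝ] V} {x d u : V} {t s : ℝ} (hts : t ≠ s)
    (h1 : v (x + t • d) = x + t • d - u) (h2 : v (x + s • d) = x + s • d - u) :
    v x = x - u ∧ v (x + d) = (x + d) - u := by
  have h1' : v x + t • v d = x + t • d - u := by rw [← map_smul, ← map_add]; exact h1
  have h2' : v x + s • v d = x + s • d - u := by rw [← map_smul, ← map_add]; exact h2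
  have h3 : (t - s) • v d = (t - s) • d := by
    rw [sub_smul, sub_smul]
    calc t • v d - s • v d = (v x + t • v d) - (v x + s • v d) := by abel
      _ = (x + t • d - u) - (x + s • d - u) := by rw [h1', h2']
      _ = t • d - s • d := by abel
  have hvd : v d = d := smul_right_injective V (sub_ne_zero.2 hts) h3
  have h4 : v x = x + t • d - u - t • d := by
    rw [← h1', hvd]
    abel
  constructor
  · rw [h4]
    abel
  · rw [map_add, hvd, h4]
    abel

end Cancel



end WaldAux

theorem waldspurger' {V : Type*} [NormedAddCommGroup V] [InnerProductSpace ℝ V]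
    [FiniteDimensional ℝ V]
    (W : Subgroup (V ≃ₗᵢ[ℝ] V)) (C : Set V)
    (hWfin : (W : Set (V ≃ₗᵢ[ℝ] V)).Finite)
    (hWgen : Subgroup.closure {g : V ≃ₗᵢ[ℝ] V | g ∈ W ∧ IsLinRefl g} = W)
    (hC : IsChamber W C)
    (hcover : ∀ v : V, ∃ w ∈ W, ∃ x ∈ C, w x = v)
    (hdisj : ∀ w ∈ W, ∀ w' ∈ W, w ≠ w' →
      ∀ x ∈ interior C, ∀ x' ∈ interior C, w x ≠ w' x') :
    (∀ w ∈ W, ∀ x ∈ interior C, ∀ y ∈ C, 0 ≤ ⟪x - w x, y⟫) ∧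
    (∀ u : V, (∀ y ∈ C, 0 ≤ ⟪u, y⟫) → ∃ w ∈ W, ∃ x ∈ interior C, u = x - w x) ∧
    (∀ w ∈ W, ∀ w' ∈ W, w ≠ w' →
      Disjoint {u : V | ∃ x ∈ interior C, u = x - w x}
        {u : V | ∃ x ∈ interior C, u = x - w' x}) := by
  classical
  obtain ⟨x₀, hx₀m, hCeq⟩ := hC
  have hreg : WaldAux.RegPt W x₀ := WaldAux.reg_of_not_mem_mirrors hx₀m
  have hUeq : connectedComponentIn (mirrors W)ᶜ x₀ = WaldAux.Up W x₀ 0 :=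
    WaldAux.U_eq_U0 hWfin hx₀m
  have hCeq2 : C = WaldAux.Cp W x₀ 0 := by
    rw [hCeq, hUeq, WaldAux.closureU0_eq_Cp hWfin hreg]
  have hIntC : interior C = WaldAux.Up W x₀ 0 := by
    rw [hCeq, hUeq, WaldAux.interior_closure_U0 hWfin hreg]
  have hHs0 : WaldAux.Hs W (0:V) = W := by
    rw [WaldAux.Hs, WaldAux.RS_zero, hWgen]
  have h0Cp : (0:V) ∈ WaldAux.Cp W x₀ 0 := by
    intro g hg
    rw [inner_zero_left]
  have hdisj0 : WaldAux.Disj0 W x₀ := by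
    intro w hw w' hw' hne x hx x' hx'
    exact hdisj w hw w' hw' hne x (by rw [hIntC]; exact hx) x' (by rw [hIntC]; exact hx')
  refine ⟨?_, ?_, ?_⟩
  · -- Part 1
    intro w hw x hx y hy
    have hxC : x ∈ WaldAux.Cp W x₀ 0 :=
      WaldAux.Up_subset_Cp 0 (by rw [← hIntC]; exact hx)
    have hyC : y ∈ WaldAux.Cp W x₀ 0 := by rw [← hCeq2]; exact hy
    have h1 := WaldAux.part1 hWfin hreg hdisj0 h0Cp (v := w)
      (by rw [hHs0]; exact hw) hxC hyC
    rw [inner_sub_left]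
    linarith
  · -- Part 2
    intro u hdual
    have hdual' : ∀ y ∈ WaldAux.Cp W x₀ 0, 0 ≤ ⟪u, y⟫ := by
      intro y hy
      exact hdual y (by rw [hCeq2]; exact hy)
    obtain ⟨w, hwmem, x, hxU, hueq⟩ := WaldAux.existence hWfin hreg hdisj0
      ((WaldAux.RS W (0:V)).ncard) 0 h0Cp le_rfl u hdual'
    exact ⟨w, by rw [← hHs0]; exact hwmem, x, by rw [hIntC]; exact hxU, hueq⟩
  · -- Part 3
    intro w hw w' hw' hne
    rw [Set.disjoint_left]
    rintro u ⟨x, hx, hux⟩ ⟨x', hx', hux'⟩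
    have hxU : x ∈ WaldAux.Up W x₀ 0 := by rw [← hIntC]; exact hx
    have hx'U : x' ∈ WaldAux.Up W x₀ 0 := by rw [← hIntC]; exact hx'
    have hxC := WaldAux.Up_subset_Cp 0 hxU
    have hx'C := WaldAux.Up_subset_Cp 0 hx'U
    have hweq : w x = x - u := by rw [hux]; abel
    have hw'eq : w' x' = x' - u := by rw [hux']; abel
    set Mseq : ℕ → V := fun k => Nat.rec x' (fun _ mk => (2⁻¹:ℝ) • (x + mk)) k with hMseq
    have hM0 : Mseq 0 = x' := rfl
    have hMsucc : ∀ k, Mseq (k+1) = (2⁻¹:ℝ) • (x + Mseq k) := fun k => rfl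
    have hstruct : ∀ k, Mseq k ∈ WaldAux.Cp W x₀ 0 ∧
        ∃ v ∈ W, v (Mseq k) = Mseq k - u := by
      intro k
      induction k with
      | zero => exact ⟨hx'C, w', hw', hw'eq⟩
      | succ k ih =>
          obtain ⟨hkC, v, hvW, hveq⟩ := ih
          obtain ⟨v2, hv2, hv2eq⟩ := WaldAux.midsol hWfin hreg hdisj0 h0Cp hxC hkC
            (by rw [hHs0]; exact hw) hweq (by rw [hHs0]; exact hvW) hveq
          refine ⟨?_, v2, by rw [← hHs0]; exact hv2, by rw [hMsucc]; exact hv2eq⟩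
          rw [hMsucc]
          intro g hg
          rw [real_inner_smul_left, inner_add_left]
          have h1 := hxC g hg
          have h2 := hkC g hg
          nlinarith
    have hMform : ∀ k, Mseq k = x + ((2:ℝ)⁻¹)^k • (x' - x) := by
      intro k
      induction k with
      | zero =>
          rw [hM0, pow_zero, one_smul]
          abel
      | succ k ih =>
          rw [hMsucc, ih]
          match_scalars <;> ring
    choose vs hvsW hvseq using (fun k => (hstruct k).2)
    haveI : Finite ↥(W : Set (V ≃ₗᵢ[ℝ] V)) := hWfin.to_subtype
    obtain ⟨k, l, hkl, hkeq⟩ := Finite.exists_ne_map_eq_of_infinite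
      (fun k : ℕ => (⟨vs k, hvsW k⟩ : ↥(W : Set (V ≃ₗᵢ[ℝ] V))))
    have hvkl : vs k = vs l := congrArg Subtype.val hkeq
    have htkl : ((2:ℝ)⁻¹)^k ≠ ((2:ℝ)⁻¹)^l := by
      intro hc
      apply hkl
      have hmono : ∀ {a b : ℕ}, a < b → ((2:ℝ)⁻¹)^b < ((2:ℝ)⁻¹)^a := by
        intro a b hab
        exact pow_lt_pow_right_of_lt_one₀ (by norm_num) (by norm_num) hab
      rcases lt_trichotomy k l with h | h | h
      · exact absurd hc (ne_of_gt (hmono h))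
      · exact h
      · exact absurd hc (ne_of_lt (hmono h))
    have heqk := hvseq k
    have heql := hvseq l
    rw [hMform k] at heqk
    rw [hMform l, ← hvkl] at heql
    obtain ⟨hvx, hvxd⟩ := WaldAux.lin_cancel htkl heqk heql
    have hx'eq : x + (x' - x) = x' := by abel
    rw [hx'eq] at hvxd
    have hvw : vs k = w := by
      by_contra hvw
      exact hdisj (vs k) (hvsW k) w hw hvw x hx x hx (by rw [hvx, hweq])
    have hvw' : vs k = w' := by
      by_contra hvw'
      exact hdisj (vs k) (hvsW k) w' hw' hvw' x' hx' x' hx' (by rw [hvxd, hw'eq])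
    exact hne (by rw [← hvw, hvw'])

/-- Waldspurger's theorem: the dual cone `C* = {u | ∀ y ∈ C, 0 ≤ ⟪u, y⟫}` is the disjoint
union over `w ∈ W` of the sets `(1 - w)(C°)`. -/
theorem waldspurger {V : Type*} [NormedAddCommGroup V] [InnerProductSpace ℝ V]
    [FiniteDimensional ℝ V]
    (W : Subgroup (V ≃ₗᵢ[ℝ] V)) (C : Set V)
    (hWfin : (W : Set (V ≃ₗᵢ[ℝ] V)).Finite)
    (hWgen : Subgroup.closure {g : V ≃ₗᵢ[ℝ] V | g ∈ W ∧ IsLinRefl g} = W)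
    (hC : IsChamber W C)
    (hcover : ∀ v : V, ∃ w ∈ W, ∃ x ∈ C, w x = v)
    (hdisj : ∀ w ∈ W, ∀ w' ∈ W, w ≠ w' →
      ∀ x ∈ interior C, ∀ x' ∈ interior C, w x ≠ w' x') :
    (∀ w ∈ W, ∀ x ∈ interior C, ∀ y ∈ C, 0 ≤ ⟪x - w x, y⟫) ∧
    (∀ u : V, (∀ y ∈ C, 0 ≤ ⟪u, y⟫) → ∃ w ∈ W, ∃ x ∈ interior C, u = x - w x) ∧
    (∀ w ∈ W, ∀ w' ∈ W, w ≠ w' →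
      Disjoint {u : V | ∃ x ∈ interior C, u = x - w x}
        {u : V | ∃ x ∈ interior C, u = x - w' x}) :=
  waldspurger' W C hWfin hWgen hC hcover hdisj
end
end
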